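/- arXiv:1808.05925 — 4 statements merged into one kernel-verified Lean document; each statement's English description precedes it below -/
import Mathlib

section
/- Let ν be a finite Borel measure on ℝ, {e_j}_{j≥1} an orthonormal basis of L²(ℝ,ν), w : ℝ → (0,∞) a weight function, and, for each n, let {X_i^n}_{i≥0} be a real-valued adapted sequence and {m_i^n}_{i≥1} a real-valued martingale difference sequence such that: E^n[|Σ_{i=1}^n 1_{(-∞,x]}(X_{i-1}^n) E^n[(m_i^n)²|F_{i-1}^n] − Ψ(x)|] → 0 for every x ∈ ℝ, where Ψ is continuous nondecreasing with Ψ(−∞) = 0 and Ψ(∞) < ∞; there is a nondecreasing Φ with I_n(x) := Σ_{i=1}^n E^n[1_{(-∞,x]}(X_{i-1}^n)(m_i^n)²] ≤ Φ(x) for all x ∈ ℝ and all sufficiently large n; and ∫_ℝ (Ψ(x)+Φ(x)) w(x)² ν(dx) < ∞. Then, with Z_n^w(x) = w(x) Σ_{i=1}^n 1_{(-∞,x]}(X_{i-1}^n) m_i^n, it holds that lim_{J→∞} limsup_{n→∞} E^n[ Σ_{j=J}^∞ ⟨Z_n^w, e_j⟩² ] = 0. -/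
open MeasureTheory ProbabilityTheory Filter
open scoped ENNReal NNReal RealInnerProductSpace Topology BoundedContinuousFunction

noncomputable section

set_option linter.unusedSectionVars false
set_option maxHeartbeats 1000000

namespace TightProof

section Prob
variable {Ω : Type*} {mΩ : MeasurableSpace Ω} {P : Measure Ω}


variable {Ω : Type*} {mΩ : MeasurableSpace Ω} {P : Measure Ω}

lemma integrable_mul_L2 {f g : Ω → ℝ} (hf : MemLp f 2 P) (hg : MemLp g 2 P) :
    Integrable (fun ω => f ω * g ω) P := by
  have h : Integrable (fun ω => (f ω ^ 2 + g ω ^ 2) / 2) P :=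
    (hf.integrable_sq.add hg.integrable_sq).div_const 2
  refine h.mono' (hf.1.mul hg.1) ?_
  filter_upwards with x
  have h2 : 2 * |f x| * |g x| ≤ |f x| ^ 2 + |g x| ^ 2 := two_mul_le_add_sq _ _
  have : ‖f x * g x‖ = |f x| * |g x| := by rw [Real.norm_eq_abs, abs_mul]
  rw [this]
  nlinarith [sq_abs (f x), sq_abs (g x)]

/-- cross term vanishes -/
lemma integral_mul_mds [IsProbabilityMeasure P] {𝒢 : Filtration ℕ mΩ} {k : ℕ}
    {f g : Ω → ℝ} (hf : StronglyMeasurable[𝒢 k] f) (hfg : Integrable (f * g) P)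
    (hg : Integrable g P) (hmds : P[g | 𝒢 k] =ᵐ[P] 0) :
    ∫ ω, f ω * g ω ∂P = 0 := by
  have h1 : ∫ ω, (f * g) ω ∂P = ∫ ω, (P[f * g | 𝒢 k]) ω ∂P :=
    (integral_condExp (𝒢.le k)).symm
  have h2 : P[f * g | 𝒢 k] =ᵐ[P] 0 := by
    refine (condExp_mul_of_stronglyMeasurable_left hf hfg hg).trans ?_
    filter_upwards [hmds] with ω hω
    simp [hω]
  calc ∫ ω, f ω * g ω ∂P = ∫ ω, (f * g) ω ∂P := rfl
    _ = ∫ ω, (P[f * g | 𝒢 k]) ω ∂P := h1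
    _ = ∫ ω, (0 : Ω → ℝ) ω ∂P := integral_congr_ae h2
    _ = 0 := by simp



variable {Ω : Type*} {mΩ : MeasurableSpace Ω} {P : Measure Ω}

variable {𝒢 : Filtration ℕ mΩ} {X : ℕ → Ω → ℝ} {m : ℕ → Ω → ℝ}

lemma ind_sm (hX : Adapted 𝒢 X) (i : ℕ) (x : ℝ) :
    StronglyMeasurable[𝒢 i] (fun ω => if X i ω ≤ x then (1:ℝ) else 0) := by
  have hs : MeasurableSet[𝒢 i] {ω | X i ω ≤ x} := (hX i) measurableSet_Iic
  have heq : (fun ω => if X i ω ≤ x then (1:ℝ) else 0)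
      = Set.indicator {ω | X i ω ≤ x} (fun _ => 1) := by
    ext ω; by_cases h : X i ω ≤ x <;> simp [Set.indicator, h]
  rw [heq]; exact stronglyMeasurable_const.indicator hs

lemma indm_L2 (hX : Adapted 𝒢 X) (hm_L2 : ∀ i, MemLp (m (i+1)) 2 P) (i : ℕ) (x : ℝ) :
    MemLp (fun ω => (if X i ω ≤ x then (1:ℝ) else 0) * m (i+1) ω) 2 P := by
  refine MemLp.of_le (hm_L2 i) (((ind_sm hX i x).mono (𝒢.le i)).aestronglyMeasurable.mul
    (hm_L2 i).1) ?_
  filter_upwards with ω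
  by_cases h : X i ω ≤ x <;> simp [h, Real.norm_eq_abs, abs_mul, abs_nonneg]

lemma integral_S_mul_S [IsProbabilityMeasure P] (hX : Adapted 𝒢 X)
    (hm_meas : ∀ i, StronglyMeasurable[𝒢 (i+1)] (m (i+1)))
    (hm_L2 : ∀ i, MemLp (m (i+1)) 2 P)
    (hm_mds : ∀ i, P[m (i+1) | 𝒢 i] =ᵐ[P] 0) (n : ℕ) (x y : ℝ) :
    ∫ ω, (∑ i ∈ Finset.range n, (if X i ω ≤ x then (1:ℝ) else 0) * m (i+1) ω) *
         (∑ i ∈ Finset.range n, (if X i ω ≤ y then (1:ℝ) else 0) * m (i+1) ω) ∂P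
      = ∑ i ∈ Finset.range n,
          ∫ ω, (if X i ω ≤ min x y then (1:ℝ) else 0) * (m (i+1) ω)^2 ∂P := by
  classical
  set a : ℕ → ℝ → Ω → ℝ := fun i t ω => (if X i ω ≤ t then (1:ℝ) else 0) * m (i+1) ω with ha
  have hint : ∀ i k : ℕ, Integrable (fun ω => a i x ω * a k y ω) P := fun i k =>
    integrable_mul_L2 (indm_L2 hX hm_L2 i x) (indm_L2 hX hm_L2 k y)
  -- cross terms vanish
  have hcross : ∀ i k : ℕ, i ≠ k → ∫ ω, a i x ω * a k y ω ∂P = 0 := by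
    intro i k hik
    rcases lt_or_gt_of_ne hik with h | h
    · have hmeas : StronglyMeasurable[𝒢 k]
          (fun ω => (if X i ω ≤ x then (1:ℝ) else 0) * m (i+1) ω *
            (if X k ω ≤ y then (1:ℝ) else 0)) :=
        (((ind_sm hX i x).mono (𝒢.mono h.le)).mul ((hm_meas i).mono (𝒢.mono h))).mul
          (ind_sm hX k y)
      have heq : (fun ω => a i x ω * a k y ω)
          = fun ω => ((if X i ω ≤ x then (1:ℝ) else 0) * m (i+1) ω *
              (if X k ω ≤ y then (1:ℝ) else 0)) * m (k+1) ω := by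
        ext ω; simp only [ha]; ring
      rw [heq]
      exact integral_mul_mds hmeas (by rw [show ((fun ω => (if X i ω ≤ x then (1:ℝ) else 0) *
          m (i+1) ω * (if X k ω ≤ y then (1:ℝ) else 0)) * m (k+1)) = fun ω => a i x ω * a k y ω
            from by ext ω; simp only [Pi.mul_apply, ha]; ring]; exact hint i k)
        ((hm_L2 k).integrable one_le_two) (hm_mds k)
    · have hmeas : StronglyMeasurable[𝒢 i]
          (fun ω => (if X i ω ≤ x then (1:ℝ) else 0) * ((if X k ω ≤ y then (1:ℝ) else 0) *
            m (k+1) ω)) :=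
        (ind_sm hX i x).mul (((ind_sm hX k y).mono (𝒢.mono h.le)).mul
          ((hm_meas k).mono (𝒢.mono h)))
      have heq : (fun ω => a i x ω * a k y ω)
          = fun ω => ((if X i ω ≤ x then (1:ℝ) else 0) * ((if X k ω ≤ y then (1:ℝ) else 0) *
              m (k+1) ω)) * m (i+1) ω := by
        ext ω; simp only [ha]; ring
      rw [heq]
      exact integral_mul_mds hmeas (by rw [show ((fun ω => (if X i ω ≤ x then (1:ℝ) else 0) *
          ((if X k ω ≤ y then (1:ℝ) else 0) * m (k+1) ω)) * m (i+1)) = fun ω => a i x ω * a k y ω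
            from by ext ω; simp only [Pi.mul_apply, ha]; ring]; exact hint i k)
        ((hm_L2 i).integrable one_le_two) (hm_mds i)
  -- diagonal terms
  have hdiag : ∀ i : ℕ, (fun ω => a i x ω * a i y ω)
      = fun ω => (if X i ω ≤ min x y then (1:ℝ) else 0) * (m (i+1) ω)^2 := by
    intro i; ext ω
    by_cases h1 : X i ω ≤ x <;> by_cases h2 : X i ω ≤ y <;>
      simp [ha, h1, h2, le_min_iff] <;> ring
  calc ∫ ω, (∑ i ∈ Finset.range n, a i x ω) * (∑ k ∈ Finset.range n, a k y ω) ∂P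
      = ∫ ω, ∑ i ∈ Finset.range n, ∑ k ∈ Finset.range n, a i x ω * a k y ω ∂P := by
        congr 1; ext ω; rw [Finset.sum_mul_sum]
    _ = ∑ i ∈ Finset.range n, ∑ k ∈ Finset.range n, ∫ ω, a i x ω * a k y ω ∂P := by
        rw [integral_finset_sum _ (fun i _ => integrable_finset_sum _
          (fun k _ => hint i k))]
        exact Finset.sum_congr rfl fun i _ => integral_finset_sum _ fun k _ => hint i k
    _ = ∑ i ∈ Finset.range n, ∑ k ∈ Finset.range n,
          (if k = i then ∫ ω, (if X i ω ≤ min x y then (1:ℝ) else 0) * (m (i+1) ω)^2 ∂P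
           else 0) := by
        refine Finset.sum_congr rfl fun i _ => Finset.sum_congr rfl fun k _ => ?_
        by_cases h : k = i
        · subst h; rw [if_pos rfl, ← hdiag k]
        · rw [if_neg h]; exact hcross i k (fun hh => h hh.symm)
    _ = ∑ i ∈ Finset.range n,
          ∫ ω, (if X i ω ≤ min x y then (1:ℝ) else 0) * (m (i+1) ω)^2 ∂P := by
        refine Finset.sum_congr rfl fun i hi => ?_
        rw [Finset.sum_ite_eq' (Finset.range n) i, if_pos hi]


end Prob

section Prob2
variable {Ω : Type*} {mΩ : MeasurableSpace Ω} {P : Measure Ω}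
variable {ν : Measure ℝ} [IsFiniteMeasure ν]
variable {𝒢 : Filtration ℕ mΩ} {X : ℕ → Ω → ℝ} {m : ℕ → Ω → ℝ} {w : ℝ → ℝ}


variable {Ω : Type*} {mΩ : MeasurableSpace Ω} {P : Measure Ω}
variable {𝒢 : Filtration ℕ mΩ} {X : ℕ → Ω → ℝ} {m : ℕ → Ω → ℝ}

lemma integrable_V [IsProbabilityMeasure P] (hX : Adapted 𝒢 X) (n : ℕ) (x : ℝ) :
    Integrable (fun ω => ∑ i ∈ Finset.range n, (if X i ω ≤ x then (1:ℝ) else 0) *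
      (P[fun ω' => (m (i+1) ω')^2 | 𝒢 i]) ω) P := by
  refine integrable_finset_sum _ fun i _ => ?_
  exact Integrable.bdd_mul integrable_condExp
    ((ind_sm hX i x).mono (𝒢.le i)).aestronglyMeasurable (c := 1)
    (ae_of_all _ fun ω => by by_cases h : X i ω ≤ x <;> simp [h])

lemma integral_V_eq_I [IsProbabilityMeasure P] (hX : Adapted 𝒢 X)
    (hm_L2 : ∀ i, MemLp (m (i+1)) 2 P) (n : ℕ) (x : ℝ) :
    ∫ ω, ∑ i ∈ Finset.range n, (if X i ω ≤ x then (1:ℝ) else 0) *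
        (P[fun ω' => (m (i+1) ω')^2 | 𝒢 i]) ω ∂P
      = ∑ i ∈ Finset.range n,
          ∫ ω, (if X i ω ≤ x then (1:ℝ) else 0) * (m (i+1) ω)^2 ∂P := by
  rw [integral_finset_sum _ (fun i _ => Integrable.bdd_mul integrable_condExp
    ((ind_sm hX i x).mono (𝒢.le i)).aestronglyMeasurable (c := 1)
    (ae_of_all _ fun ω => by by_cases h : X i ω ≤ x <;> simp [h]))]
  refine Finset.sum_congr rfl fun i _ => ?_
  have hs : MeasurableSet[𝒢 i] {ω | X i ω ≤ x} := (hX i) measurableSet_Iic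
  have key : ∀ g : Ω → ℝ, ∫ ω, (if X i ω ≤ x then (1:ℝ) else 0) * g ω ∂P
      = ∫ ω in {ω | X i ω ≤ x}, g ω ∂P := by
    intro g
    rw [← integral_indicator (𝒢.le i _ hs)]
    congr 1; ext ω; by_cases h : X i ω ≤ x <;> simp [Set.indicator, h]
  rw [key, key, setIntegral_condExp (𝒢.le i) (hm_L2 i).integrable_sq hs]



variable {Ω : Type*} {mΩ : MeasurableSpace Ω} {P : Measure Ω} [IsProbabilityMeasure P]
variable {ν : Measure ℝ} [IsFiniteMeasure ν]
variable {𝒢 : Filtration ℕ mΩ} {X : ℕ → Ω → ℝ} {m : ℕ → Ω → ℝ} {w : ℝ → ℝ}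

/-- the empirical process -/
def S (X : ℕ → Ω → ℝ) (m : ℕ → Ω → ℝ) (n : ℕ) (x : ℝ) (ω : Ω) : ℝ :=
  ∑ i ∈ Finset.range n, (if X i ω ≤ x then (1:ℝ) else 0) * m (i+1) ω


lemma integral_S_mul_S_S [IsProbabilityMeasure P] (hX : Adapted 𝒢 X)
    (hm_meas : ∀ i, StronglyMeasurable[𝒢 (i+1)] (m (i+1)))
    (hm_L2 : ∀ i, MemLp (m (i+1)) 2 P)
    (hm_mds : ∀ i, P[m (i + 1) | 𝒢 i] =ᵐ[P] 0) (n : ℕ) (x y : ℝ) :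
    ∫ ω, S X m n x ω * S X m n y ω ∂P
      = ∑ i ∈ Finset.range n,
          ∫ ω, (if X i ω ≤ min x y then (1:ℝ) else 0) * (m (i+1) ω)^2 ∂P :=
  integral_S_mul_S hX hm_meas hm_L2 hm_mds n x y

lemma S_jointly_meas (hX : Adapted 𝒢 X) (hm : ∀ i, StronglyMeasurable[𝒢 (i+1)] (m (i+1)))
    (n : ℕ) : Measurable (fun p : Ω × ℝ => S X m n p.2 p.1) := by
  refine Finset.measurable_sum _ fun i _ => Measurable.mul ?_ ?_
  · have hs : MeasurableSet {p : Ω × ℝ | X i p.1 ≤ p.2} := by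
      exact measurableSet_le (((hX i).mono (𝒢.le i) le_rfl).comp measurable_fst)
        measurable_snd
    exact Measurable.ite hs measurable_const measurable_const
  · exact ((hm i).mono (𝒢.le (i+1))).measurable.comp measurable_fst

lemma inner_repr {n : ℕ} {Z : Ω → Lp ℝ 2 ν}
    (hZ : ∀ ω, (Z ω : ℝ → ℝ) =ᵐ[ν] fun x => w x * S X m n x ω)
    (ω : Ω) (f : Lp ℝ 2 ν) {g : ℝ → ℝ} (hg : (f : ℝ → ℝ) =ᵐ[ν] g) :
    ⟪Z ω, f⟫ = ∫ x, (w x * S X m n x ω) * g x ∂ν := by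
  rw [L2.inner_def]
  refine integral_congr_ae ?_
  filter_upwards [hZ ω, hg] with x hx hx2
  rw [hx, hx2]; simp [RCLike.inner_apply]; ring

lemma inner_self_repr {n : ℕ} {Z : Ω → Lp ℝ 2 ν}
    (hZ : ∀ ω, (Z ω : ℝ → ℝ) =ᵐ[ν] fun x => w x * S X m n x ω) (ω : Ω) :
    ⟪Z ω, Z ω⟫ = ∫ x, (w x * S X m n x ω)^2 ∂ν := by
  rw [L2.inner_def]
  refine integral_congr_ae ?_
  filter_upwards [hZ ω] with x hx
  rw [hx]; simp [RCLike.inner_apply, mul_pow, sq_abs]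

lemma wS_memL2 {n : ℕ} {Z : Ω → Lp ℝ 2 ν}
    (hZ : ∀ ω, (Z ω : ℝ → ℝ) =ᵐ[ν] fun x => w x * S X m n x ω) (ω : Ω) :
    MemLp (fun x => w x * S X m n x ω) 2 ν :=
  (Lp.memLp (Z ω)).ae_eq (hZ ω)


/-- `I n x` -/
def Ifun (P : Measure Ω) (X : ℕ → Ω → ℝ) (m : ℕ → Ω → ℝ) (n : ℕ) (x : ℝ) : ℝ :=
  ∑ i ∈ Finset.range n, ∫ ω, (if X i ω ≤ x then (1:ℝ) else 0) * (m (i+1) ω)^2 ∂P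

lemma S_memL2 (hX : Adapted 𝒢 X) (hm_L2 : ∀ i, MemLp (m (i+1)) 2 P) (n : ℕ) (x : ℝ) :
    MemLp (fun ω => S X m n x ω) 2 P :=
  by
    have := memLp_finset_sum' (μ := P) (Finset.range n)
      (f := fun i ω => (if X i ω ≤ x then (1:ℝ) else 0) * m (i+1) ω)
      (fun i _ => indm_L2 hX hm_L2 i x)
    refine this.ae_eq (Eventually.of_forall fun ω => ?_)
    simp [S, Finset.sum_apply]

lemma integral_sq_S (hX : Adapted 𝒢 X)
    (hm_meas : ∀ i, StronglyMeasurable[𝒢 (i+1)] (m (i+1)))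
    (hm_L2 : ∀ i, MemLp (m (i+1)) 2 P)
    (hm_mds : ∀ i, P[m (i+1) | 𝒢 i] =ᵐ[P] 0) (n : ℕ) (x : ℝ) :
    ∫ ω, (w x * S X m n x ω)^2 ∂P = (w x)^2 * Ifun P X m n x := by
  have h1 : (fun ω => (w x * S X m n x ω)^2)
      = fun ω => (w x)^2 * (S X m n x ω * S X m n x ω) := by ext ω; ring
  rw [h1, integral_const_mul, integral_S_mul_S_S hX hm_meas hm_L2 hm_mds n x x]
  rw [min_self]; rfl

lemma lintegral_inner_self {n : ℕ} {Z : Ω → Lp ℝ 2 ν} (hw : Measurable w)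
    (hX : Adapted 𝒢 X)
    (hm_meas : ∀ i, StronglyMeasurable[𝒢 (i+1)] (m (i+1)))
    (hm_L2 : ∀ i, MemLp (m (i+1)) 2 P)
    (hm_mds : ∀ i, P[m (i+1) | 𝒢 i] =ᵐ[P] 0)
    (hZ : ∀ ω, (Z ω : ℝ → ℝ) =ᵐ[ν] fun x => w x * S X m n x ω) :
    ∫⁻ ω, ENNReal.ofReal ⟪Z ω, Z ω⟫ ∂P
      = ∫⁻ x, ENNReal.ofReal ((w x)^2 * Ifun P X m n x) ∂ν := by
  have hGmeas : Measurable (fun p : Ω × ℝ => ENNReal.ofReal ((w p.2 * S X m n p.2 p.1)^2)) := by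
    exact (((hw.comp measurable_snd).mul (S_jointly_meas hX hm_meas n)).pow_const 2).ennreal_ofReal
  have step1 : ∀ ω, ENNReal.ofReal ⟪Z ω, Z ω⟫
      = ∫⁻ x, ENNReal.ofReal ((w x * S X m n x ω)^2) ∂ν := by
    intro ω
    rw [inner_self_repr hZ ω]
    exact ofReal_integral_eq_lintegral_ofReal
      ((wS_memL2 hZ ω).integrable_sq)
      (Eventually.of_forall fun x => sq_nonneg _)
  have step3 : ∀ x, ∫⁻ ω, ENNReal.ofReal ((w x * S X m n x ω)^2) ∂P
      = ENNReal.ofReal ((w x)^2 * Ifun P X m n x) := by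
    intro x
    rw [← ofReal_integral_eq_lintegral_ofReal
      (((S_memL2 hX hm_L2 n x).const_mul (w x)).integrable_sq)
      (Eventually.of_forall fun ω => sq_nonneg _)]
    rw [integral_sq_S hX hm_meas hm_L2 hm_mds n x]
  calc ∫⁻ ω, ENNReal.ofReal ⟪Z ω, Z ω⟫ ∂P
      = ∫⁻ ω, ∫⁻ x, ENNReal.ofReal ((w x * S X m n x ω)^2) ∂ν ∂P :=
        lintegral_congr step1
    _ = ∫⁻ x, ∫⁻ ω, ENNReal.ofReal ((w x * S X m n x ω)^2) ∂P ∂ν :=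
        lintegral_lintegral_swap hGmeas.aemeasurable
    _ = ∫⁻ x, ENNReal.ofReal ((w x)^2 * Ifun P X m n x) ∂ν := lintegral_congr step3

lemma sq_integral_abs_le {n : ℕ} {Z : Ω → Lp ℝ 2 ν}
    (hZ : ∀ ω, (Z ω : ℝ → ℝ) =ᵐ[ν] fun x => w x * S X m n x ω)
    (ω : Ω) {g : ℝ → ℝ} (hgL2 : MemLp g 2 ν) :
    (∫ x, |w x * S X m n x ω * g x| ∂ν)^2 ≤ ⟪Z ω, Z ω⟫ * ∫ x, (g x)^2 ∂ν := by
  have h2 : ENNReal.ofReal (2:ℝ) = 2 := by norm_num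
  have hcs := integral_mul_norm_le_Lp_mul_Lq (μ := ν)
    (show Real.HolderConjugate 2 2 from Real.HolderConjugate.two_two)
    (f := fun x => w x * S X m n x ω) (g := g)
    (by rw [h2]; exact wS_memL2 hZ ω) (by rw [h2]; exact hgL2)
  have hrw : ∀ u : ℝ → ℝ, (∫ x, ‖u x‖ ^ (2:ℝ) ∂ν) = ∫ x, (u x)^2 ∂ν := by
    intro u
    refine integral_congr_ae (Eventually.of_forall fun x => ?_)
    show ‖u x‖ ^ (2:ℝ) = u x ^ 2
    rw [show (2:ℝ) = ((2:ℕ):ℝ) by norm_num, Real.rpow_natCast, Real.norm_eq_abs, sq_abs]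
  rw [hrw, hrw] at hcs
  have habs : (∫ x, |w x * S X m n x ω * g x| ∂ν)
      = ∫ x, ‖w x * S X m n x ω‖ * ‖g x‖ ∂ν := by
    refine integral_congr_ae (Eventually.of_forall fun x => ?_)
    simp only [Real.norm_eq_abs, abs_mul]
  have hκ : (0:ℝ) ≤ ∫ x, (w x * S X m n x ω)^2 ∂ν :=
    integral_nonneg fun x => sq_nonneg _
  have hc : (0:ℝ) ≤ ∫ x, (g x)^2 ∂ν := integral_nonneg fun x => sq_nonneg _
  have habsnn : (0:ℝ) ≤ ∫ x, |w x * S X m n x ω * g x| ∂ν :=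
    integral_nonneg fun x => abs_nonneg _
  have hpow : ((∫ x, (w x * S X m n x ω)^2 ∂ν) ^ ((1:ℝ)/2) *
      (∫ x, (g x)^2 ∂ν) ^ ((1:ℝ)/2))^2
      = (∫ x, (w x * S X m n x ω)^2 ∂ν) * ∫ x, (g x)^2 ∂ν := by
    rw [mul_pow, ← Real.rpow_natCast (_ ^ ((1:ℝ)/2)) 2, ← Real.rpow_natCast (_ ^ ((1:ℝ)/2)) 2,
      ← Real.rpow_mul hκ, ← Real.rpow_mul hc]
    norm_num
  calc (∫ x, |w x * S X m n x ω * g x| ∂ν)^2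
      ≤ ((∫ x, (w x * S X m n x ω)^2 ∂ν) ^ ((1:ℝ)/2) *
        (∫ x, (g x)^2 ∂ν) ^ ((1:ℝ)/2))^2 := by
        apply pow_le_pow_left₀ habsnn
        rw [habs]; exact hcs
    _ = (∫ x, (w x * S X m n x ω)^2 ∂ν) * ∫ x, (g x)^2 ∂ν := hpow
    _ = ⟪Z ω, Z ω⟫ * ∫ x, (g x)^2 ∂ν := by rw [inner_self_repr hZ ω]

lemma integral_inner_sq {n : ℕ} {Z : Ω → Lp ℝ 2 ν} (hw : Measurable w)
    (hX : Adapted 𝒢 X)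
    (hm_meas : ∀ i, StronglyMeasurable[𝒢 (i+1)] (m (i+1)))
    (hm_L2 : ∀ i, MemLp (m (i+1)) 2 P)
    (hm_mds : ∀ i, P[m (i + 1) | 𝒢 i] =ᵐ[P] 0)
    (hZ : ∀ ω, (Z ω : ℝ → ℝ) =ᵐ[ν] fun x => w x * S X m n x ω)
    (hZZ : Integrable (fun ω => ⟪Z ω, Z ω⟫) P)
    (f : Lp ℝ 2 ν) {g : ℝ → ℝ} (hgmeas : Measurable g)
    (hfg : (f : ℝ → ℝ) =ᵐ[ν] g) :
    ∫ ω, ⟪Z ω, f⟫^2 ∂P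
      = ∫ p : ℝ × ℝ, (w p.1 * w p.2 * Ifun P X m n (min p.1 p.2)) * (g p.1 * g p.2)
          ∂(ν.prod ν) := by
  set H : Ω → ℝ → ℝ := fun ω x => w x * S X m n x ω * g x with hH
  have hgL2 : MemLp g 2 ν := (Lp.memLp f).ae_eq hfg
  have hH_int : ∀ ω, Integrable (fun x => H ω x) ν := by
    intro ω
    have h0 : Integrable (fun x => inner ℝ ((Z ω) x) (f x) : ℝ → ℝ) ν := L2.integrable_inner _ _
    refine (h0.congr ?_)
    filter_upwards [hZ ω, hfg] with x hx hx2
    rw [RCLike.inner_apply] at *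
    simp [hH, hx, hx2, mul_comm]
  have hHmeas : Measurable (fun q : Ω × ℝ => H q.1 q.2) :=
    ((hw.comp measurable_snd).mul (S_jointly_meas hX hm_meas n)).mul (hgmeas.comp measurable_snd)
  have hKmeas : Measurable (fun q : Ω × (ℝ × ℝ) => H q.1 q.2.1 * H q.1 q.2.2) := by
    refine Measurable.mul ?_ ?_
    · exact hHmeas.comp (measurable_fst.prodMk (measurable_fst.comp measurable_snd))
    · exact hHmeas.comp (measurable_fst.prodMk (measurable_snd.comp measurable_snd))
  set c : ℝ := ∫ x, (g x)^2 ∂ν with hc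
  have hK : Integrable (fun q : Ω × (ℝ × ℝ) => H q.1 q.2.1 * H q.1 q.2.2)
      (P.prod (ν.prod ν)) := by
    refine (integrable_prod_iff hKmeas.aestronglyMeasurable).mpr ⟨?_, ?_⟩
    · exact Eventually.of_forall fun ω => (hH_int ω).mul_prod (hH_int ω)
    · have hmeas2 : AEStronglyMeasurable
          (fun ω => ∫ p : ℝ × ℝ, ‖H ω p.1 * H ω p.2‖ ∂(ν.prod ν)) P :=
        hKmeas.aestronglyMeasurable.norm.integral_prod_right'
      refine Integrable.mono' (hZZ.mul_const c) hmeas2 (Eventually.of_forall fun ω => ?_)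
      have heval : ∫ p : ℝ × ℝ, ‖H ω p.1 * H ω p.2‖ ∂(ν.prod ν)
          = (∫ x, |H ω x| ∂ν) * (∫ x, |H ω x| ∂ν) := by
        rw [← integral_prod_mul (μ := ν) (ν := ν) (fun x => |H ω x|) (fun x => |H ω x|)]
        refine integral_congr_ae (Eventually.of_forall fun p => ?_)
        simp only [Real.norm_eq_abs, abs_mul]
      rw [Real.norm_eq_abs, heval, ← sq]
      have hb := sq_integral_abs_le hZ ω hgL2
      rw [abs_of_nonneg (by positivity)]
      exact hb
  calc ∫ ω, ⟪Z ω, f⟫^2 ∂P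
      = ∫ ω, ∫ p : ℝ × ℝ, H ω p.1 * H ω p.2 ∂(ν.prod ν) ∂P := by
        refine integral_congr_ae (Eventually.of_forall fun ω => ?_)
        show ⟪Z ω, f⟫^2 = ∫ p : ℝ × ℝ, H ω p.1 * H ω p.2 ∂(ν.prod ν)
        rw [inner_repr hZ ω f hfg, integral_prod_mul (μ := ν) (ν := ν)
          (fun x => H ω x) (fun x => H ω x), sq]
    _ = ∫ p : ℝ × ℝ, ∫ ω, H ω p.1 * H ω p.2 ∂P ∂(ν.prod ν) :=
        integral_integral_swap hK
    _ = ∫ p : ℝ × ℝ, (w p.1 * w p.2 * Ifun P X m n (min p.1 p.2)) * (g p.1 * g p.2)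
          ∂(ν.prod ν) := by
        refine integral_congr_ae (Eventually.of_forall fun p => ?_)
        show (∫ ω, H ω p.1 * H ω p.2 ∂P)
          = (w p.1 * w p.2 * Ifun P X m n (min p.1 p.2)) * (g p.1 * g p.2)
        have h1 : (fun ω => H ω p.1 * H ω p.2)
            = fun ω => (w p.1 * g p.1 * (w p.2 * g p.2)) *
                (S X m n p.1 ω * S X m n p.2 ω) := by
          ext ω; simp only [hH]; ring
        rw [h1, integral_const_mul, integral_S_mul_S_S hX hm_meas hm_L2 hm_mds n p.1 p.2]
        show w p.1 * g p.1 * (w p.2 * g p.2) * Ifun P X m n (min p.1 p.2) = _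
        ring

lemma I_nonneg (n : ℕ) (x : ℝ) : 0 ≤ Ifun P X m n x :=
  Finset.sum_nonneg fun i _ => integral_nonneg fun ω => by positivity

lemma indmsq_int (hX : Adapted 𝒢 X) (hm_L2 : ∀ i, MemLp (m (i+1)) 2 P) (i : ℕ) (x : ℝ) :
    Integrable (fun ω => (if X i ω ≤ x then (1:ℝ) else 0) * (m (i+1) ω)^2) P := by
  refine Integrable.bdd_mul (hm_L2 i).integrable_sq
    (((ind_sm hX i x).mono (𝒢.le i)).aestronglyMeasurable) (c := 1) (ae_of_all _ fun ω => ?_)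
  by_cases h : X i ω ≤ x <;> simp [h]

lemma I_mono (n : ℕ) (hX : Adapted 𝒢 X) (hm_L2 : ∀ i, MemLp (m (i+1)) 2 P) :
    Monotone (Ifun P X m n) := by
  intro x y hxy
  refine Finset.sum_le_sum fun i _ => ?_
  refine integral_mono (indmsq_int hX hm_L2 i x) (indmsq_int hX hm_L2 i y) fun ω => ?_
  dsimp only
  by_cases h : X i ω ≤ x
  · rw [if_pos h, if_pos (h.trans hxy)]
  · rw [if_neg h, zero_mul]
    exact mul_nonneg (by split <;> norm_num) (sq_nonneg _)

lemma inner_self_sm {n : ℕ} {Z : Ω → Lp ℝ 2 ν} (hw : Measurable w)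
    (hX : Adapted 𝒢 X) (hm_meas : ∀ i, StronglyMeasurable[𝒢 (i+1)] (m (i+1)))
    (hZ : ∀ ω, (Z ω : ℝ → ℝ) =ᵐ[ν] fun x => w x * S X m n x ω) :
    StronglyMeasurable (fun ω => ⟪Z ω, Z ω⟫) := by
  have h0 : StronglyMeasurable (fun ω => ∫ x, (w x * S X m n x ω)^2 ∂ν) :=
    ((((hw.comp measurable_snd).mul
      (S_jointly_meas hX hm_meas n)).pow_const 2).stronglyMeasurable).integral_prod_right'
  have heq : (fun ω => ⟪Z ω, Z ω⟫) = fun ω => ∫ x, (w x * S X m n x ω)^2 ∂ν :=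
    funext fun ω => inner_self_repr hZ ω
  rw [heq]; exact h0

lemma inner_j_sm {n : ℕ} {Z : Ω → Lp ℝ 2 ν} (hw : Measurable w)
    (hX : Adapted 𝒢 X) (hm_meas : ∀ i, StronglyMeasurable[𝒢 (i+1)] (m (i+1)))
    (hZ : ∀ ω, (Z ω : ℝ → ℝ) =ᵐ[ν] fun x => w x * S X m n x ω)
    (f : Lp ℝ 2 ν) {g : ℝ → ℝ} (hgmeas : Measurable g) (hfg : (f : ℝ → ℝ) =ᵐ[ν] g) :
    StronglyMeasurable (fun ω => ⟪Z ω, f⟫) := by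
  have h0 : StronglyMeasurable (fun ω => ∫ x, (w x * S X m n x ω) * g x ∂ν) :=
    ((((hw.comp measurable_snd).mul (S_jointly_meas hX hm_meas n)).mul
      (hgmeas.comp measurable_snd)).stronglyMeasurable).integral_prod_right'
  have heq : (fun ω => ⟪Z ω, f⟫) = fun ω => ∫ x, (w x * S X m n x ω) * g x ∂ν :=
    funext fun ω => inner_repr hZ ω f hfg
  rw [heq]; exact h0

lemma integrable_inner_self {n : ℕ} {Z : Ω → Lp ℝ 2 ν} (hw : Measurable w)
    (hX : Adapted 𝒢 X) (hm_meas : ∀ i, StronglyMeasurable[𝒢 (i+1)] (m (i+1)))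
    (hm_L2 : ∀ i, MemLp (m (i+1)) 2 P)
    (hm_mds : ∀ i, P[m (i + 1) | 𝒢 i] =ᵐ[P] 0)
    (hZ : ∀ ω, (Z ω : ℝ → ℝ) =ᵐ[ν] fun x => w x * S X m n x ω)
    (hfin : ∫⁻ x, ENNReal.ofReal ((w x)^2 * Ifun P X m n x) ∂ν ≠ ∞) :
    Integrable (fun ω => ⟪Z ω, Z ω⟫) P := by
  refine ⟨(inner_self_sm hw hX hm_meas hZ).aestronglyMeasurable, ?_⟩
  rw [hasFiniteIntegral_iff_norm]
  have : ∫⁻ ω, ENNReal.ofReal ‖⟪Z ω, Z ω⟫‖ ∂P = ∫⁻ ω, ENNReal.ofReal ⟪Z ω, Z ω⟫ ∂P :=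
    lintegral_congr fun ω => by rw [Real.norm_eq_abs, abs_of_nonneg real_inner_self_nonneg]
  rw [this, lintegral_inner_self hw hX hm_meas hm_L2 hm_mds hZ]
  exact hfin.lt_top

lemma integral_inner_self_eq {n : ℕ} {Z : Ω → Lp ℝ 2 ν} (hw : Measurable w)
    (hX : Adapted 𝒢 X) (hm_meas : ∀ i, StronglyMeasurable[𝒢 (i+1)] (m (i+1)))
    (hm_L2 : ∀ i, MemLp (m (i+1)) 2 P)
    (hm_mds : ∀ i, P[m (i + 1) | 𝒢 i] =ᵐ[P] 0)
    (hZ : ∀ ω, (Z ω : ℝ → ℝ) =ᵐ[ν] fun x => w x * S X m n x ω)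
    (hIint : Integrable (fun x => (w x)^2 * Ifun P X m n x) ν) :
    ∫ ω, ⟪Z ω, Z ω⟫ ∂P = ∫ x, (w x)^2 * Ifun P X m n x ∂ν := by
  rw [integral_eq_lintegral_of_nonneg_ae (Eventually.of_forall fun ω => real_inner_self_nonneg)
      (inner_self_sm hw hX hm_meas hZ).aestronglyMeasurable,
    lintegral_inner_self hw hX hm_meas hm_L2 hm_mds hZ,
    ← ofReal_integral_eq_lintegral_ofReal hIint
      (Eventually.of_forall fun x => mul_nonneg (sq_nonneg _) (I_nonneg n x)),
    ENNReal.toReal_ofReal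
      (integral_nonneg fun x => mul_nonneg (sq_nonneg _) (I_nonneg n x))]

lemma tail_formula {n : ℕ} {Z : Ω → Lp ℝ 2 ν}
    (e : ℕ → Lp ℝ 2 ν) (he_on : Orthonormal ℝ e)
    (b : HilbertBasis ℕ ℝ (Lp ℝ 2 ν)) (hbe : ∀ j, b j = e j)
    (hZZint : Integrable (fun ω => ⟪Z ω, Z ω⟫) P)
    (hinner_sm : ∀ j, StronglyMeasurable (fun ω => ⟪Z ω, e j⟫)) (J : ℕ) :
    ∫ ω, ∑' j : ℕ, ⟪Z ω, e (J + j)⟫^2 ∂P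
      = (∫ ω, ⟪Z ω, Z ω⟫ ∂P) - ∑ j ∈ Finset.range J, ∫ ω, ⟪Z ω, e j⟫^2 ∂P := by
  have hps : ∀ ω, HasSum (fun j => ⟪Z ω, e j⟫^2) ⟪Z ω, Z ω⟫ := by
    intro ω
    have h0 := b.hasSum_inner_mul_inner (Z ω) (Z ω)
    have hfun : (fun j => ⟪Z ω, b j⟫ * ⟪b j, Z ω⟫) = fun j => ⟪Z ω, e j⟫^2 := by
      funext j
      rw [← hbe j, sq, real_inner_comm]
    rw [hfun] at h0
    exact h0
  have hptw : ∀ ω, ∑' j : ℕ, ⟪Z ω, e (J + j)⟫^2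
      = ⟪Z ω, Z ω⟫ - ∑ j ∈ Finset.range J, ⟪Z ω, e j⟫^2 := by
    intro ω
    have h1 := Summable.sum_add_tsum_nat_add (f := fun j => ⟪Z ω, e j⟫^2) J (hps ω).summable
    rw [(hps ω).tsum_eq] at h1
    have h2 : ∑' j : ℕ, ⟪Z ω, e (J + j)⟫^2 = ∑' j : ℕ, ⟪Z ω, e (j + J)⟫^2 :=
      tsum_congr fun j => by rw [add_comm]
    rw [h2]
    linarith
  have hjint : ∀ j, Integrable (fun ω => ⟪Z ω, e j⟫^2) P := by
    intro j
    refine hZZint.mono' ((hinner_sm j).pow 2).aestronglyMeasurable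
      (Eventually.of_forall fun ω => ?_)
    have hb := real_inner_mul_inner_self_le (Z ω) (e j)
    have he1 : ⟪e j, e j⟫ = (1:ℝ) := by
      rw [real_inner_self_eq_norm_sq, he_on.1 j]; norm_num
    rw [he1, mul_one] at hb
    rw [Real.norm_eq_abs, abs_of_nonneg (sq_nonneg _), sq]
    exact hb
  have heq : (fun ω => ∑' j : ℕ, ⟪Z ω, e (J + j)⟫^2)
      = fun ω => ⟪Z ω, Z ω⟫ - ∑ j ∈ Finset.range J, ⟪Z ω, e j⟫^2 := funext hptw
  rw [heq, integral_sub hZZint (integrable_finset_sum _ fun j _ => hjint j),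
    integral_finset_sum _ fun j _ => hjint j]


end Prob2

section Real
variable {ν : Measure ℝ} [IsFiniteMeasure ν]


variable {ν : Measure ℝ} [IsFiniteMeasure ν]

/-- Cauchy-Schwarz for integrals. -/
lemma sq_integral_mul_abs_le {u g : ℝ → ℝ} (hu : MemLp u 2 ν) (hg : MemLp g 2 ν) :
    (∫ x, |u x * g x| ∂ν)^2 ≤ (∫ x, (u x)^2 ∂ν) * (∫ x, (g x)^2 ∂ν) := by
  have h2 : ENNReal.ofReal (2:ℝ) = 2 := by norm_num
  have hcs := integral_mul_norm_le_Lp_mul_Lq (μ := ν)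
    (show Real.HolderConjugate 2 2 from Real.HolderConjugate.two_two)
    (f := u) (g := g) (by rw [h2]; exact hu) (by rw [h2]; exact hg)
  have hrw : ∀ v : ℝ → ℝ, (∫ x, ‖v x‖ ^ (2:ℝ) ∂ν) = ∫ x, (v x)^2 ∂ν := by
    intro v
    refine integral_congr_ae (Eventually.of_forall fun x => ?_)
    show ‖v x‖ ^ (2:ℝ) = v x ^ 2
    rw [show (2:ℝ) = ((2:ℕ):ℝ) by norm_num, Real.rpow_natCast, Real.norm_eq_abs, sq_abs]
  rw [hrw, hrw] at hcs
  have habs : (∫ x, |u x * g x| ∂ν) = ∫ x, ‖u x‖ * ‖g x‖ ∂ν := by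
    refine integral_congr_ae (Eventually.of_forall fun x => ?_)
    simp only [Real.norm_eq_abs, abs_mul]
  have hκ : (0:ℝ) ≤ ∫ x, (u x)^2 ∂ν := integral_nonneg fun x => sq_nonneg _
  have hc : (0:ℝ) ≤ ∫ x, (g x)^2 ∂ν := integral_nonneg fun x => sq_nonneg _
  have habsnn : (0:ℝ) ≤ ∫ x, |u x * g x| ∂ν := integral_nonneg fun x => abs_nonneg _
  have hpow : ((∫ x, (u x)^2 ∂ν) ^ ((1:ℝ)/2) * (∫ x, (g x)^2 ∂ν) ^ ((1:ℝ)/2))^2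
      = (∫ x, (u x)^2 ∂ν) * ∫ x, (g x)^2 ∂ν := by
    rw [mul_pow, ← Real.rpow_natCast (_ ^ ((1:ℝ)/2)) 2, ← Real.rpow_natCast (_ ^ ((1:ℝ)/2)) 2,
      ← Real.rpow_mul hκ, ← Real.rpow_mul hc]
    norm_num
  calc (∫ x, |u x * g x| ∂ν)^2
      ≤ ((∫ x, (u x)^2 ∂ν) ^ ((1:ℝ)/2) * (∫ x, (g x)^2 ∂ν) ^ ((1:ℝ)/2))^2 := by
        apply pow_le_pow_left₀ habsnn
        rw [habs]; exact hcs
    _ = _ := hpow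



variable {ν : Measure ℝ} [IsFiniteMeasure ν]

/-- trace identity -/
lemma trace_identity {w Ψ : ℝ → ℝ} (hw : Measurable w) (hw0 : ∀ x, 0 ≤ w x)
    (μ : Measure ℝ) [IsFiniteMeasure μ]
    (hμIic : ∀ c, μ (Set.Iic c) = ENNReal.ofReal (Ψ c))
    (hΨ0 : ∀ x, 0 ≤ Ψ x)
    (hΨint : Integrable (fun x => Ψ x * (w x)^2) ν)
    (e : ℕ → Lp ℝ 2 ν) (he_on : Orthonormal ℝ e)
    (he_total : (Submodule.span ℝ (Set.range e)).topologicalClosure = ⊤)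
    (g : ℕ → ℝ → ℝ) (hgmeas : ∀ j, Measurable (g j))
    (hfg : ∀ j, ((e j : ℝ → ℝ)) =ᵐ[ν] g j) :
    HasSum (fun j => ∫ p : ℝ × ℝ,
        (w p.1 * w p.2 * Ψ (min p.1 p.2)) * (g j p.1 * g j p.2) ∂(ν.prod ν))
      (∫ x, Ψ x * (w x)^2 ∂ν) := by
  classical
  set f : ℝ → ℝ≥0∞ := fun x => ENNReal.ofReal ((w x)^2) with hf
  have hfmeas : Measurable f := (hw.pow_const 2).ennreal_ofReal
  set R : ℝ → ℝ≥0∞ := fun t => ∫⁻ x, (if t ≤ x then f x else 0) ∂ν with hR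
  have hRanti : Antitone R := by
    intro s t hst
    refine lintegral_mono fun x => ?_
    by_cases h : t ≤ x
    · rw [if_pos h, if_pos (hst.trans h)]
    · rw [if_neg h]; exact zero_le
  have hRmeas : Measurable R := hRanti.measurable
  -- Tonelli identity
  have hT1 : ∫⁻ t, R t ∂μ = ENNReal.ofReal (∫ x, Ψ x * (w x)^2 ∂ν) := by
    have hJmeas : Measurable (fun q : ℝ × ℝ => if q.1 ≤ q.2 then f q.2 else 0) := by
      exact Measurable.ite (measurableSet_le measurable_fst measurable_snd)
        (hfmeas.comp measurable_snd) measurable_const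
    calc ∫⁻ t, R t ∂μ
        = ∫⁻ x, ∫⁻ t, (if t ≤ x then f x else 0) ∂μ ∂ν :=
          lintegral_lintegral_swap hJmeas.aemeasurable
      _ = ∫⁻ x, f x * μ (Set.Iic x) ∂ν := by
          refine lintegral_congr fun x => ?_
          rw [← lintegral_indicator_const measurableSet_Iic (f x)]
          refine lintegral_congr fun t => ?_
          by_cases h : t ≤ x <;> simp [Set.indicator, h]
      _ = ∫⁻ x, ENNReal.ofReal (Ψ x * (w x)^2) ∂ν := by
          refine lintegral_congr fun x => ?_
          rw [hμIic, hf, ← ENNReal.ofReal_mul (sq_nonneg _), mul_comm]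
      _ = ENNReal.ofReal (∫ x, Ψ x * (w x)^2 ∂ν) :=
          (ofReal_integral_eq_lintegral_ofReal hΨint
            (Eventually.of_forall fun x => mul_nonneg (hΨ0 x) (sq_nonneg _))).symm
  have hRfin : ∀ᵐ t ∂μ, R t < ∞ :=
    ae_lt_top hRmeas (by rw [hT1]; exact ENNReal.ofReal_ne_top)
  -- the truncated weight
  set u : ℝ → ℝ → ℝ := fun t x => if t ≤ x then w x else 0 with hu
  have hu_meas : ∀ t, Measurable (u t) := fun t =>
    Measurable.ite measurableSet_Ici hw measurable_const
  have hu_sq : ∀ t x, (u t x)^2 = ((if t ≤ x then f x else 0)).toReal := by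
    intro t x; by_cases h : t ≤ x <;>
      simp [hu, hf, h, ENNReal.toReal_ofReal (sq_nonneg (w x))]
  have hfi_meas : ∀ t, Measurable fun x => (if t ≤ x then f x else 0) := fun t =>
    Measurable.ite measurableSet_Ici hfmeas measurable_const
  have hu_sq_int : ∀ t, R t ≠ ∞ → Integrable (fun x => (u t x)^2) ν := by
    intro t ht
    have h0 := integrable_toReal_of_lintegral_ne_top ((hfi_meas t).aemeasurable) ht
    exact h0.congr (Eventually.of_forall fun x => (hu_sq t x).symm)
  have hu_mem : ∀ t, R t ≠ ∞ → MemLp (u t) 2 ν := fun t ht =>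
    (memLp_two_iff_integrable_sq (hu_meas t).aestronglyMeasurable).mpr (hu_sq_int t ht)
  have hgL2 : ∀ j, MemLp (g j) 2 ν := fun j => (Lp.memLp (e j)).ae_eq (hfg j)
  -- the coefficients
  set β : ℕ → ℝ → ℝ :=
    fun j t => ∫ x, (if t ≤ x then (1:ℝ) else 0) * (w x * g j x) ∂ν with hβ
  have hqmeas : ∀ j, Measurable (fun q : ℝ × ℝ => (if q.1 ≤ q.2 then (1:ℝ) else 0) *
      (w q.2 * g j q.2)) := by
    intro j
    exact (Measurable.ite (measurableSet_le measurable_fst measurable_snd) measurable_const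
      measurable_const).mul ((hw.mul (hgmeas j)).comp measurable_snd)
  have hβmeas : ∀ j, StronglyMeasurable (β j) := fun j =>
    (hqmeas j).stronglyMeasurable.integral_prod_right'
  set ρ : ℝ → ℝ := fun t => ∫ x, (u t x)^2 ∂ν with hρ
  have hρR : ∀ t, ρ t = (R t).toReal := by
    intro t
    show (∫ x, (u t x)^2 ∂ν) = (R t).toReal
    rw [integral_eq_lintegral_of_nonneg_ae (Eventually.of_forall fun x => sq_nonneg _)
      ((hu_meas t).pow_const 2).aestronglyMeasurable]
    congr 1
    refine lintegral_congr fun x => ?_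
    rw [hu_sq t x, ENNReal.ofReal_toReal]
    by_cases h : t ≤ x
    · simp [h, hf]
    · simp [h]
  -- q t = u t * g j pointwise
  have hqu : ∀ j t x, (if t ≤ x then (1:ℝ) else 0) * (w x * g j x) = u t x * g j x := by
    intro j t x; by_cases h : t ≤ x <;> simp [hu, h]
  have hq_int : ∀ j t, R t ≠ ∞ → Integrable
      (fun x => (if t ≤ x then (1:ℝ) else 0) * (w x * g j x)) ν := by
    intro j t ht
    refine (integrable_mul_L2 (hu_mem t ht) (hgL2 j)).congr
      (Eventually.of_forall fun x => (hqu j t x).symm)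
  -- Parseval almost everywhere
  set b : HilbertBasis ℕ ℝ (Lp ℝ 2 ν) := HilbertBasis.mk he_on (by rw [he_total]) with hb
  have hbe : ∀ j, b j = e j := fun j => by rw [hb, HilbertBasis.coe_mk]
  have hParseval : ∀ᵐ t ∂μ, HasSum (fun j => (β j t)^2) (ρ t) := by
    filter_upwards [hRfin] with t hRt
    set Gt : Lp ℝ 2 ν := (hu_mem t hRt.ne).toLp (u t) with hGt
    have hGt_coe : (Gt : ℝ → ℝ) =ᵐ[ν] u t := (hu_mem t hRt.ne).coeFn_toLp
    have hinner : ∀ j, ⟪Gt, e j⟫ = β j t := by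
      intro j
      rw [L2.inner_def, hβ]
      refine integral_congr_ae ?_
      filter_upwards [hGt_coe, hfg j] with x hx hx2
      rw [RCLike.inner_apply, hx, hx2, hqu j t x]
      simp [mul_comm]
    have hself : ⟪Gt, Gt⟫ = ρ t := by
      rw [L2.inner_def, hρ]
      refine integral_congr_ae ?_
      filter_upwards [hGt_coe] with x hx
      rw [RCLike.inner_apply, hx]
      simp [sq]
    have hsum := b.hasSum_inner_mul_inner Gt Gt
    rw [hself] at hsum
    have hfun : (fun j => ⟪Gt, b j⟫ * ⟪b j, Gt⟫) = fun j => (β j t)^2 := by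
      funext j
      have h2 : ⟪Gt, b j⟫ = β j t := by rw [hbe j]; exact hinner j
      have h3 : ⟪b j, Gt⟫ = β j t := by
        rw [hbe j, real_inner_comm]; exact hinner j
      rw [h2, h3, sq]
    rw [hfun] at hsum
    exact hsum
  -- the ENNReal coefficients
  set Q : ℕ → ℝ≥0∞ := fun j => ∫⁻ t, ENNReal.ofReal ((β j t)^2) ∂μ with hQ
  have hQsum : ∑' j, Q j = ENNReal.ofReal (∫ x, Ψ x * (w x)^2 ∂ν) := by
    have h0 : ∀ᵐ t ∂μ, (∑' j, ENNReal.ofReal ((β j t)^2)) = R t := by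
      filter_upwards [hParseval, hRfin] with t ht hfin
      rw [← ENNReal.ofReal_tsum_of_nonneg (fun j => sq_nonneg _) ht.summable, ht.tsum_eq,
        hρR t, ENNReal.ofReal_toReal hfin.ne]
    calc ∑' j, Q j = ∫⁻ t, ∑' j, ENNReal.ofReal ((β j t)^2) ∂μ :=
          (lintegral_tsum fun j =>
            (((hβmeas j).measurable.pow_const 2).ennreal_ofReal).aemeasurable).symm
      _ = ∫⁻ t, R t ∂μ := lintegral_congr_ae h0
      _ = _ := hT1
  -- Fubini: kernel integral equals ∫ (β j t)^2 dμ
  have hA : ∀ j, ∫ p : ℝ × ℝ,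
      (w p.1 * w p.2 * Ψ (min p.1 p.2)) * (g j p.1 * g j p.2) ∂(ν.prod ν)
      = ∫ t, (β j t)^2 ∂μ := by
    intro j
    set q : ℝ → ℝ → ℝ := fun t x => (if t ≤ x then (1:ℝ) else 0) * (w x * g j x) with hqdef
    have hHmeas : Measurable (fun r : ℝ × (ℝ × ℝ) => q r.1 r.2.1 * q r.1 r.2.2) := by
      have h1 : Measurable (fun r : ℝ × (ℝ × ℝ) => q r.1 r.2.1) :=
        (hqmeas j).comp (measurable_fst.prodMk (measurable_fst.comp measurable_snd))
      have h2 : Measurable (fun r : ℝ × (ℝ × ℝ) => q r.1 r.2.2) :=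
        (hqmeas j).comp (measurable_fst.prodMk (measurable_snd.comp measurable_snd))
      exact h1.mul h2
    set cj : ℝ := ∫ x, (g j x)^2 ∂ν with hcj
    have hHint : Integrable (fun r : ℝ × (ℝ × ℝ) => q r.1 r.2.1 * q r.1 r.2.2)
        (μ.prod (ν.prod ν)) := by
      refine (integrable_prod_iff hHmeas.aestronglyMeasurable).mpr ⟨?_, ?_⟩
      · filter_upwards [hRfin] with t ht
        exact (hq_int j t ht.ne).mul_prod (hq_int j t ht.ne)
      · have hmeas2 : AEStronglyMeasurable
            (fun t => ∫ p : ℝ × ℝ, ‖q t p.1 * q t p.2‖ ∂(ν.prod ν)) μ :=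
          hHmeas.aestronglyMeasurable.norm.integral_prod_right'
        have hρint : Integrable (fun t => (R t).toReal * cj) μ :=
          (integrable_toReal_of_lintegral_ne_top hRmeas.aemeasurable
            (by rw [hT1]; exact ENNReal.ofReal_ne_top)).mul_const cj
        refine Integrable.mono' hρint hmeas2 ?_
        filter_upwards [hRfin] with t ht
        have heval : ∫ p : ℝ × ℝ, ‖q t p.1 * q t p.2‖ ∂(ν.prod ν)
            = (∫ x, |q t x| ∂ν) * (∫ x, |q t x| ∂ν) := by
          rw [← integral_prod_mul (μ := ν) (ν := ν) (fun x => |q t x|) (fun x => |q t x|)]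
          refine integral_congr_ae (Eventually.of_forall fun p => ?_)
          simp only [Real.norm_eq_abs, abs_mul]
        rw [Real.norm_eq_abs, abs_of_nonneg (integral_nonneg fun p => norm_nonneg _), heval,
          ← sq]
        have hCS : (∫ x, |u t x * g j x| ∂ν)^2
            ≤ (∫ x, (u t x)^2 ∂ν) * (∫ x, (g j x)^2 ∂ν) :=
          sq_integral_mul_abs_le (hu_mem t ht.ne) (hgL2 j)
        have habs : (∫ x, |q t x| ∂ν) = ∫ x, |u t x * g j x| ∂ν := by
          refine integral_congr_ae (Eventually.of_forall fun x => ?_)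
          rw [hqdef]; simp only [hqu j t x]
        rw [habs]
        calc (∫ x, |u t x * g j x| ∂ν)^2
            ≤ (∫ x, (u t x)^2 ∂ν) * (∫ x, (g j x)^2 ∂ν) := hCS
          _ = (R t).toReal * cj := by rw [← hρR t]
    have hswap : ∫ t, (∫ p : ℝ × ℝ, q t p.1 * q t p.2 ∂(ν.prod ν)) ∂μ
        = ∫ p : ℝ × ℝ, (∫ t, q t p.1 * q t p.2 ∂μ) ∂(ν.prod ν) :=
      integral_integral_swap hHint
    have hleft : ∀ t, ∫ p : ℝ × ℝ, q t p.1 * q t p.2 ∂(ν.prod ν) = (β j t)^2 := by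
      intro t
      rw [integral_prod_mul (μ := ν) (ν := ν) (q t) (q t), sq]
    have hright : ∀ p : ℝ × ℝ, (∫ t, q t p.1 * q t p.2 ∂μ)
        = (w p.1 * w p.2 * Ψ (min p.1 p.2)) * (g j p.1 * g j p.2) := by
      intro p
      have h1 : (fun t => q t p.1 * q t p.2)
          = fun t => ((w p.1 * g j p.1) * (w p.2 * g j p.2)) *
              (if t ≤ min p.1 p.2 then (1:ℝ) else 0) := by
        ext t; rw [hqdef]
        by_cases h1 : t ≤ p.1 <;> by_cases h2 : t ≤ p.2 <;>
          simp [h1, h2, le_min_iff] <;> ring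
      rw [h1, integral_const_mul]
      have h2 : (fun t => if t ≤ min p.1 p.2 then (1:ℝ) else 0)
          = (Set.Iic (min p.1 p.2)).indicator (fun _ => (1:ℝ)) := by
        ext t; by_cases h : t ≤ min p.1 p.2 <;> simp [Set.indicator, h]
      rw [h2, integral_indicator_const (1:ℝ) measurableSet_Iic, measureReal_def, hμIic,
        ENNReal.toReal_ofReal (hΨ0 _)]
      simp only [smul_eq_mul, mul_one]
      ring
    calc ∫ p : ℝ × ℝ, (w p.1 * w p.2 * Ψ (min p.1 p.2)) * (g j p.1 * g j p.2) ∂(ν.prod ν)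
        = ∫ p : ℝ × ℝ, (∫ t, q t p.1 * q t p.2 ∂μ) ∂(ν.prod ν) := by
          exact integral_congr_ae (Eventually.of_forall fun p => (hright p).symm)
      _ = ∫ t, (∫ p : ℝ × ℝ, q t p.1 * q t p.2 ∂(ν.prod ν)) ∂μ := hswap.symm
      _ = ∫ t, (β j t)^2 ∂μ := integral_congr_ae (Eventually.of_forall fun t => hleft t)
  -- conclusion
  have hKQ : ∀ j, (∫ p : ℝ × ℝ,
      (w p.1 * w p.2 * Ψ (min p.1 p.2)) * (g j p.1 * g j p.2) ∂(ν.prod ν)) = (Q j).toReal := by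
    intro j
    rw [hA j, integral_eq_lintegral_of_nonneg_ae (Eventually.of_forall fun t => sq_nonneg _)
      ((hβmeas j).measurable.pow_const 2).aestronglyMeasurable]
  have hQfin : ∀ j, Q j ≠ ∞ := fun j => ne_top_of_le_ne_top
    (by rw [hQsum]; exact ENNReal.ofReal_ne_top) (ENNReal.le_tsum j)
  have hsummable : Summable (fun j => (Q j).toReal) :=
    ENNReal.summable_toReal (by rw [hQsum]; exact ENNReal.ofReal_ne_top)
  have htsum : ∑' j, (Q j).toReal = ∫ x, Ψ x * (w x)^2 ∂ν := by
    rw [← ENNReal.tsum_toReal_eq hQfin, hQsum, ENNReal.toReal_ofReal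
      (integral_nonneg fun x => mul_nonneg (hΨ0 x) (sq_nonneg _))]
  have H := hsummable.hasSum
  rw [htsum] at H
  have hfun : (fun j => ∫ p : ℝ × ℝ,
      (w p.1 * w p.2 * Ψ (min p.1 p.2)) * (g j p.1 * g j p.2) ∂(ν.prod ν))
      = fun j => (Q j).toReal := funext fun j => hKQ j
  rw [hfun]
  exact H


end Real

end TightProof
/-- **Lemma 3.2 (tightness estimate for `Z_n^w`).** Under Assumption 1.2 (i), for any
orthonormal basis `{e_j}` of `L²(ℝ,ν)`,
`lim_{J→∞} limsup_{n→∞} E^n[ Σ_{j≥J} ⟨Z_n^w, e_j⟩² ] = 0`. -/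
theorem tightness_weighted_marked_empirical_process
    (ν : Measure ℝ) [IsFiniteMeasure ν]
    -- an orthonormal basis of L²(ℝ,ν)
    (e : ℕ → Lp ℝ 2 ν) (he_on : Orthonormal ℝ e)
    (he_total : (Submodule.span ℝ (Set.range e)).topologicalClosure = ⊤)
    -- the weight function
    (w : ℝ → ℝ) (hw_meas : Measurable w) (hw_pos : ∀ x, 0 < w x)
    -- the filtered probability spaces
    (Ω : ℕ → Type*) [ms : ∀ n, MeasurableSpace (Ω n)]
    (P : ∀ n, Measure (Ω n)) [∀ n, IsProbabilityMeasure (P n)]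
    (ℱ : ∀ n, Filtration ℕ (ms n))
    -- the adapted sequence X and the martingale difference sequence m
    (X : ∀ n, ℕ → Ω n → ℝ) (hX : ∀ n, Adapted (ℱ n) (X n))
    (m : ∀ n, ℕ → Ω n → ℝ)
    (hm_meas : ∀ n i, StronglyMeasurable[(ℱ n) (i + 1)] (m n (i + 1)))
    (hm_L2 : ∀ n i, MemLp (m n (i + 1)) 2 (P n))
    (hm_mds : ∀ n i, (P n)[m n (i + 1) | (ℱ n) i] =ᵐ[P n] 0)
    -- the limiting variance function Ψ
    (Ψ : ℝ → ℝ) (hΨ_cont : Continuous Ψ) (hΨ_mono : Monotone Ψ)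
    (hΨ_bot : Tendsto Ψ atBot (𝓝 0)) (hΨ_top : ∃ L : ℝ, Tendsto Ψ atTop (𝓝 L))
    -- Assumption 1.2 (i): L¹ convergence of the conditional variances
    (h1 : ∀ x : ℝ,
      Tendsto (fun n => ∫ ω,
          |(∑ i ∈ Finset.range n, (if X n i ω ≤ x then (1 : ℝ) else 0) *
              ((P n)[fun ω' => (m n (i + 1) ω') ^ 2 | (ℱ n) i]) ω) - Ψ x| ∂(P n))
        atTop (𝓝 0))
    -- Assumption 1.2 (i): domination `I_n ≤ Φ` for large n and ∫ (Ψ + Φ) w² dν < ∞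
    (hΦ : ∃ Φ : ℝ → ℝ, Monotone Φ ∧
      (∀ᶠ n in atTop, ∀ x : ℝ,
        (∑ i ∈ Finset.range n,
            ∫ ω, (if X n i ω ≤ x then (1 : ℝ) else 0) * (m n (i + 1) ω) ^ 2 ∂(P n)) ≤ Φ x) ∧
      Integrable (fun x => (Ψ x + Φ x) * (w x) ^ 2) ν)
    -- the L²(ℝ,ν)-valued random elements Z_n^w
    (Z : ∀ n, Ω n → Lp ℝ 2 ν)
    (hZ : ∀ n ω, (Z n ω : ℝ → ℝ) =ᵐ[ν] fun x =>
      w x * ∑ i ∈ Finset.range n, (if X n i ω ≤ x then (1 : ℝ) else 0) * m n (i + 1) ω) :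
    -- conclusion: lim_J limsup_n E^n[ Σ_{j≥J} ⟨Z_n^w, e_j⟩² ] = 0
    Tendsto (fun J : ℕ =>
        limsup (fun n => ∫ ω, (∑' j : ℕ, ⟪Z n ω, e (J + j)⟫ ^ 2) ∂(P n)) atTop)
      atTop (𝓝 0) := by
  classical
  obtain ⟨Φ, hΦmono, hΦev, hΦint⟩ := hΦ
  obtain ⟨L, hΨL⟩ := hΨ_top
  set T : ℝ := ∫ x, Ψ x * (w x)^2 ∂ν with hT
  have hΨ0 : ∀ x, 0 ≤ Ψ x := by
    intro x
    refine le_of_tendsto hΨ_bot ?_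
    filter_upwards [eventually_le_atBot x] with y hy using hΨ_mono hy
  set I : ℕ → ℝ → ℝ := fun n => TightProof.Ifun (P n) (X n) (m n) n with hI
  obtain ⟨N, hN⟩ := eventually_atTop.mp hΦev
  have hIbd : ∀ n, N ≤ n → ∀ x, I n x ≤ Φ x := fun n hn x => hN n hn x
  have hI0 : ∀ n x, 0 ≤ I n x := fun n x => TightProof.I_nonneg n x
  have hImono : ∀ n, Monotone (I n) := fun n => TightProof.I_mono n (hX n) (hm_L2 n)
  have hΦ0 : ∀ x, 0 ≤ Φ x := fun x => (hI0 N x).trans (hIbd N le_rfl x)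
  have hwm2 : Measurable fun x => (w x)^2 := hw_meas.pow_const 2
  have hΨm : Measurable Ψ := hΨ_cont.measurable
  have hΨint : Integrable (fun x => Ψ x * (w x)^2) ν := by
    refine hΦint.mono' (hΨm.mul hwm2).aestronglyMeasurable (Eventually.of_forall fun x => ?_)
    rw [Real.norm_eq_abs, abs_of_nonneg (mul_nonneg (hΨ0 x) (sq_nonneg _))]
    have h := hΦ0 x; nlinarith [sq_nonneg (w x)]
  have hΦint2 : Integrable (fun x => Φ x * (w x)^2) ν := by
    refine hΦint.mono' (hΦmono.measurable.mul hwm2).aestronglyMeasurable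
      (Eventually.of_forall fun x => ?_)
    rw [Real.norm_eq_abs, abs_of_nonneg (mul_nonneg (hΦ0 x) (sq_nonneg _))]
    have h := hΨ0 x; nlinarith [sq_nonneg (w x)]
  -- pointwise convergence of `I n` to `Ψ`
  have hIΨ : ∀ x, Tendsto (fun n => I n x) atTop (𝓝 (Ψ x)) := by
    intro x
    have hbd : ∀ n, |I n x - Ψ x| ≤ ∫ ω,
        |(∑ i ∈ Finset.range n, (if X n i ω ≤ x then (1 : ℝ) else 0) *
            ((P n)[fun ω' => (m n (i + 1) ω') ^ 2 | (ℱ n) i]) ω) - Ψ x| ∂(P n) := by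
      intro n
      have hVI : ∫ ω, (∑ i ∈ Finset.range n, (if X n i ω ≤ x then (1 : ℝ) else 0) *
          ((P n)[fun ω' => (m n (i + 1) ω') ^ 2 | (ℱ n) i]) ω) ∂(P n) = I n x :=
        TightProof.integral_V_eq_I (hX n) (hm_L2 n) n x
      have h2 : I n x - Ψ x = ∫ ω, ((∑ i ∈ Finset.range n,
          (if X n i ω ≤ x then (1 : ℝ) else 0) *
            ((P n)[fun ω' => (m n (i + 1) ω') ^ 2 | (ℱ n) i]) ω) - Ψ x) ∂(P n) := by
        rw [integral_sub (TightProof.integrable_V (hX n) n x) (integrable_const _), hVI,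
          integral_const]
        simp
      rw [h2, ← Real.norm_eq_abs]
      refine (norm_integral_le_integral_norm _).trans_eq ?_
      simp [Real.norm_eq_abs]
    have h0 : Tendsto (fun n => |I n x - Ψ x|) atTop (𝓝 0) :=
      squeeze_zero (fun n => abs_nonneg _) hbd (h1 x)
    have h0' : Tendsto (fun n => I n x - Ψ x) atTop (𝓝 0) := by
      rwa [tendsto_zero_iff_abs_tendsto_zero]
    have h0'' := h0'.add_const (Ψ x)
    simpa using h0''
  -- measurable representatives of the basis vectors
  set g : ℕ → ℝ → ℝ := fun j => (Lp.aestronglyMeasurable (e j)).mk _ with hg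
  have hgmeas : ∀ j, Measurable (g j) := fun j =>
    (Lp.aestronglyMeasurable (e j)).stronglyMeasurable_mk.measurable
  have hfg : ∀ j, ((e j : ℝ → ℝ)) =ᵐ[ν] g j := fun j =>
    (Lp.aestronglyMeasurable (e j)).ae_eq_mk
  have hgL2 : ∀ j, MemLp (g j) 2 ν := fun j => (Lp.memLp (e j)).ae_eq (hfg j)
  -- the Stieltjes measure of Ψ
  set F : StieltjesFunction ℝ :=
    { toFun := Ψ, mono' := hΨ_mono,
      right_continuous' := fun x => hΨ_cont.continuousAt.continuousWithinAt } with hF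
  haveI : IsFiniteMeasure F.measure := F.isFiniteMeasure hΨ_bot hΨL
  have hμIic : ∀ c, F.measure (Set.Iic c) = ENNReal.ofReal (Ψ c) := by
    intro c
    rw [F.measure_Iic hΨ_bot]
    norm_num
    rfl
  -- the trace identity
  have htrace : HasSum (fun j => ∫ p : ℝ × ℝ,
      (w p.1 * w p.2 * Ψ (min p.1 p.2)) * (g j p.1 * g j p.2) ∂(ν.prod ν)) T :=
    TightProof.trace_identity hw_meas (fun x => (hw_pos x).le) F.measure hμIic hΨ0 hΨint
      e he_on he_total g hgmeas hfg
  set A : ℕ → ℝ := fun j => ∫ p : ℝ × ℝ,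
      (w p.1 * w p.2 * Ψ (min p.1 p.2)) * (g j p.1 * g j p.2) ∂(ν.prod ν) with hA
  -- the Hilbert basis
  set b : HilbertBasis ℕ ℝ (Lp ℝ 2 ν) := HilbertBasis.mk he_on (by rw [he_total]) with hb
  have hbe : ∀ j, b j = e j := fun j => by rw [hb, HilbertBasis.coe_mk]
  -- per-n quantities
  set t : ℕ → ℝ := fun n => ∫ ω, ⟪Z n ω, Z n ω⟫ ∂(P n) with ht
  set a : ℕ → ℕ → ℝ := fun n j => ∫ ω, ⟪Z n ω, e j⟫^2 ∂(P n) with ha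
  have hIint : ∀ n, N ≤ n → Integrable (fun x => (w x)^2 * I n x) ν := by
    intro n hn
    refine hΦint2.mono' (hwm2.mul (hImono n).measurable).aestronglyMeasurable
      (Eventually.of_forall fun x => ?_)
    rw [Real.norm_eq_abs, abs_of_nonneg (mul_nonneg (sq_nonneg _) (hI0 n x))]
    calc (w x)^2 * I n x ≤ (w x)^2 * Φ x :=
          mul_le_mul_of_nonneg_left (hIbd n hn x) (sq_nonneg _)
      _ = Φ x * (w x)^2 := mul_comm _ _
  have hfin : ∀ n, N ≤ n → (∫⁻ x, ENNReal.ofReal ((w x)^2 * I n x) ∂ν) ≠ ∞ := by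
    intro n hn
    rw [← ofReal_integral_eq_lintegral_ofReal (hIint n hn)
      (Eventually.of_forall fun x => mul_nonneg (sq_nonneg _) (hI0 n x))]
    exact ENNReal.ofReal_ne_top
  have hZZint : ∀ n, N ≤ n → Integrable (fun ω => ⟪Z n ω, Z n ω⟫) (P n) := fun n hn =>
    TightProof.integrable_inner_self hw_meas (hX n) (hm_meas n) (hm_L2 n) (hm_mds n)
      (hZ n) (hfin n hn)
  have htn : ∀ n, N ≤ n → t n = ∫ x, (w x)^2 * I n x ∂ν := fun n hn =>
    TightProof.integral_inner_self_eq hw_meas (hX n) (hm_meas n) (hm_L2 n) (hm_mds n)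
      (hZ n) (hIint n hn)
  have haj : ∀ n, N ≤ n → ∀ j, a n j = ∫ p : ℝ × ℝ,
      (w p.1 * w p.2 * I n (min p.1 p.2)) * (g j p.1 * g j p.2) ∂(ν.prod ν) := fun n hn j =>
    TightProof.integral_inner_sq hw_meas (hX n) (hm_meas n) (hm_L2 n) (hm_mds n) (hZ n)
      (hZZint n hn) (e j) (hgmeas j) (hfg j)
  -- limit of the second moments
  have hlim_t : Tendsto t atTop (𝓝 T) := by
    have hmain : Tendsto (fun n => ∫ x, (w x)^2 * I n x ∂ν) atTop (𝓝 T) := by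
      have hTT : T = ∫ x, (w x)^2 * Ψ x ∂ν := by
        rw [hT]; exact integral_congr_ae (Eventually.of_forall fun x => mul_comm _ _)
      rw [hTT]
      refine tendsto_integral_filter_of_dominated_convergence (fun x => Φ x * (w x)^2)
        ?_ ?_ hΦint2 ?_
      · exact Eventually.of_forall fun n =>
          (hwm2.mul (hImono n).measurable).aestronglyMeasurable
      · filter_upwards [eventually_ge_atTop N] with n hn
        refine Eventually.of_forall fun x => ?_
        rw [Real.norm_eq_abs, abs_of_nonneg (mul_nonneg (sq_nonneg _) (hI0 n x))]
        calc (w x)^2 * I n x ≤ (w x)^2 * Φ x :=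
              mul_le_mul_of_nonneg_left (hIbd n hn x) (sq_nonneg _)
          _ = Φ x * (w x)^2 := mul_comm _ _
      · exact Eventually.of_forall fun x => (hIΨ x).const_mul ((w x)^2)
    refine Tendsto.congr' ?_ hmain
    filter_upwards [eventually_ge_atTop N] with n hn
    exact (htn n hn).symm
  -- limit of the coefficients
  have hlim_a : ∀ j, Tendsto (fun n => a n j) atTop (𝓝 (A j)) := by
    intro j
    have hdL2a : MemLp (fun x => w x * Real.sqrt (Φ x)) 2 ν := by
      refine (memLp_two_iff_integrable_sq
        ((hw_meas.mul (Real.continuous_sqrt.measurable.comp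
          hΦmono.measurable))).aestronglyMeasurable).mpr ?_
      refine hΦint2.congr (Eventually.of_forall fun x => ?_)
      show Φ x * (w x)^2 = (w x * Real.sqrt (Φ x))^2
      rw [mul_pow, Real.sq_sqrt (hΦ0 x)]
      ring
    have hdint : Integrable (fun x => (w x * Real.sqrt (Φ x)) * ‖g j x‖) ν :=
      TightProof.integrable_mul_L2 hdL2a (hgL2 j).norm
    have hmain : Tendsto (fun n => ∫ p : ℝ × ℝ,
        (w p.1 * w p.2 * I n (min p.1 p.2)) * (g j p.1 * g j p.2) ∂(ν.prod ν))
        atTop (𝓝 (A j)) := by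
      refine tendsto_integral_filter_of_dominated_convergence
        (fun p : ℝ × ℝ => ((w p.1 * Real.sqrt (Φ p.1)) * ‖g j p.1‖) *
          ((w p.2 * Real.sqrt (Φ p.2)) * ‖g j p.2‖)) ?_ ?_ (hdint.mul_prod hdint) ?_
      · refine Eventually.of_forall fun n => Measurable.aestronglyMeasurable ?_
        refine Measurable.mul (Measurable.mul ?_ ?_) (Measurable.mul ?_ ?_)
        · exact (hw_meas.comp measurable_fst).mul (hw_meas.comp measurable_snd)
        · exact (hImono n).measurable.comp (measurable_fst.min measurable_snd)
        · exact (hgmeas j).comp measurable_fst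
        · exact (hgmeas j).comp measurable_snd
      · filter_upwards [eventually_ge_atTop N] with n hn
        refine Eventually.of_forall fun p => ?_
        have key : I n (min p.1 p.2) ≤ Real.sqrt (Φ p.1) * Real.sqrt (Φ p.2) := by
          have h1 : I n (min p.1 p.2) ≤ Φ (min p.1 p.2) := hIbd n hn _
          have h2 : Φ (min p.1 p.2) ≤ Real.sqrt (Φ p.1) * Real.sqrt (Φ p.2) := by
            have hmm : Real.sqrt (Φ (min p.1 p.2)) * Real.sqrt (Φ (min p.1 p.2))
                ≤ Real.sqrt (Φ p.1) * Real.sqrt (Φ p.2) :=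
              mul_le_mul (Real.sqrt_le_sqrt (hΦmono (min_le_left _ _)))
                (Real.sqrt_le_sqrt (hΦmono (min_le_right _ _))) (Real.sqrt_nonneg _)
                (Real.sqrt_nonneg _)
            rwa [Real.mul_self_sqrt (hΦ0 _)] at hmm
          linarith
        have hw1 := (hw_pos p.1).le
        have hw2 := (hw_pos p.2).le
        have hIn := hI0 n (min p.1 p.2)
        rw [Real.norm_eq_abs, abs_mul, abs_of_nonneg (by positivity : (0:ℝ) ≤
          w p.1 * w p.2 * I n (min p.1 p.2)), abs_mul]
        calc w p.1 * w p.2 * I n (min p.1 p.2) * (|g j p.1| * |g j p.2|)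
            ≤ w p.1 * w p.2 * (Real.sqrt (Φ p.1) * Real.sqrt (Φ p.2)) *
              (|g j p.1| * |g j p.2|) := by
              have hg1 : (0:ℝ) ≤ |g j p.1| * |g j p.2| := by positivity
              nlinarith [mul_le_mul_of_nonneg_left key (mul_nonneg hw1 hw2)]
          _ = ((w p.1 * Real.sqrt (Φ p.1)) * ‖g j p.1‖) *
              ((w p.2 * Real.sqrt (Φ p.2)) * ‖g j p.2‖) := by
              simp only [Real.norm_eq_abs]; ring
      · refine Eventually.of_forall fun p => ?_
        exact ((hIΨ (min p.1 p.2)).const_mul (w p.1 * w p.2)).mul_const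
          (g j p.1 * g j p.2)
    refine Tendsto.congr' ?_ hmain
    filter_upwards [eventually_ge_atTop N] with n hn
    exact (haj n hn j).symm
  -- the tail formula
  have htail : ∀ J : ℕ, ∀ n, N ≤ n →
      (∫ ω, (∑' j : ℕ, ⟪Z n ω, e (J + j)⟫ ^ 2) ∂(P n))
        = t n - ∑ j ∈ Finset.range J, a n j := by
    intro J n hn
    exact TightProof.tail_formula (n := n) e he_on b hbe (hZZint n hn)
      (fun j => TightProof.inner_j_sm hw_meas (hX n) (hm_meas n) (hZ n) (e j)
        (hgmeas j) (hfg j)) J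
  have hulim : ∀ J : ℕ, Tendsto
      (fun n => ∫ ω, (∑' j : ℕ, ⟪Z n ω, e (J + j)⟫ ^ 2) ∂(P n)) atTop
      (𝓝 (T - ∑ j ∈ Finset.range J, A j)) := by
    intro J
    refine Tendsto.congr' ?_ (hlim_t.sub (tendsto_finset_sum _ fun j _ => hlim_a j))
    filter_upwards [eventually_ge_atTop N] with n hn
    exact (htail J n hn).symm
  have hlimsup : ∀ J : ℕ, limsup
      (fun n => ∫ ω, (∑' j : ℕ, ⟪Z n ω, e (J + j)⟫ ^ 2) ∂(P n)) atTop
      = T - ∑ j ∈ Finset.range J, A j := fun J => (hulim J).limsup_eq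
  have hfinal : Tendsto (fun J : ℕ => T - ∑ j ∈ Finset.range J, A j) atTop (𝓝 0) := by
    have h2 := htrace.tendsto_sum_nat
    have h3 := (tendsto_const_nhds (x := T) (f := (atTop : Filter ℕ))).sub h2
    simpa using h3
  exact hfinal.congr fun J => (hlimsup J).symm
end
end

section
/- Let B be a standard Brownian motion and let μ be a Borel probability measure on ℝ, absolutely continuous with respect to Lebesgue measure, with cumulative distribution function Ψ(x) = μ((−∞,x]), and suppose ∫_ℝ Ψ(x)^{−1/2} μ(dx) < ∞. Then the random variable ∫_ℝ (|B(Ψ(x))|²/Ψ(x)) μ(dx) has the same distribution as ∫_0^1 (|B(u)|²/u) du. -/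
open MeasureTheory ProbabilityTheory Filter
open scoped ENNReal NNReal Topology

noncomputable section

/-- A standard Brownian motion on `[0,∞)` (the values for negative times are irrelevant). -/
def IsStandardBrownianMotion {Ω : Type*} [MeasurableSpace Ω]
    (P : Measure Ω) (B : ℝ → Ω → ℝ) : Prop :=
  (∀ t, Measurable (B t)) ∧
  (∀ᵐ ω ∂P, Continuous fun t => B t ω) ∧
  (∀ᵐ ω ∂P, B 0 ω = 0) ∧
  (∀ s t : ℝ, 0 ≤ s → s ≤ t →
      P.map (fun ω => B t ω - B s ω) = gaussianReal 0 (t - s).toNNReal) ∧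
  (∀ n : ℕ, ∀ t : Fin (n + 1) → ℝ, (∀ i, 0 ≤ t i) → Monotone t →
      iIndepFun
        (fun i : Fin n => fun ω => B (t i.succ) ω - B (t i.castSucc) ω) P)

/-- The probability integral transform: the pushforward of an atomless probability measure
on `ℝ` under its own cdf is the uniform measure on `(0,1]`. -/
lemma map_cdf_eq_uniform (μ : Measure ℝ) [IsProbabilityMeasure μ] (h0 : ∀ x, μ {x} = 0)
    {Ψ : ℝ → ℝ} (hΨ : ∀ x, Ψ x = (μ (Set.Iic x)).toReal) :
    μ.map Ψ = volume.restrict (Set.Ioc (0 : ℝ) 1) := by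
  have hmono : Monotone Ψ := fun a b hab => by
    rw [hΨ, hΨ]
    exact ENNReal.toReal_mono (measure_ne_top μ _) (measure_mono (Set.Iic_subset_Iic.2 hab))
  have hmeas : Measurable Ψ := hmono.measurable
  have h0le : ∀ x, 0 ≤ Ψ x := fun x => by rw [hΨ]; exact ENNReal.toReal_nonneg
  have hofReal : ∀ x, ENNReal.ofReal (Ψ x) = μ (Set.Iic x) := fun x => by
    rw [hΨ]; exact ENNReal.ofReal_toReal (measure_ne_top μ _)
  have hIioIic : ∀ x, μ (Set.Iio x) = μ (Set.Iic x) := by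
    intro x
    refine le_antisymm (measure_mono Set.Iio_subset_Iic_self) ?_
    calc μ (Set.Iic x) = μ (Set.Iio x ∪ {x}) := by rw [Set.Iio_union_right]
      _ ≤ μ (Set.Iio x) + μ {x} := measure_union_le _ _
      _ = μ (Set.Iio x) := by rw [h0 x, add_zero]
  -- continuity from above at any point
  have hA : ∀ a : ℝ, Tendsto (fun n : ℕ => μ (Set.Iic (a + 1 / (n + 1)))) atTop
      (𝓝 (μ (Set.Iic a))) := by
    intro a
    have hanti : Antitone fun n : ℕ => Set.Iic (a + 1 / ((n : ℝ) + 1)) := by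
      intro n m hnm
      apply Set.Iic_subset_Iic.2
      have : (1 : ℝ) / (m + 1) ≤ 1 / (n + 1) := by
        apply one_div_le_one_div_of_le (by positivity)
        exact_mod_cast Nat.succ_le_succ hnm
      linarith
    have hInter : ⋂ n : ℕ, Set.Iic (a + 1 / ((n : ℝ) + 1)) = Set.Iic a := by
      ext x
      simp only [Set.mem_iInter, Set.mem_Iic]
      constructor
      · intro h
        by_contra hx
        push_neg at hx
        obtain ⟨n, hn⟩ := exists_nat_one_div_lt (sub_pos.2 hx)
        have := h n
        linarith
      · intro h n
        have : (0 : ℝ) < 1 / ((n : ℝ) + 1) := by positivity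
        linarith
    have := tendsto_measure_iInter_atTop
      (μ := μ) (fun n => measurableSet_Iic.nullMeasurableSet) hanti ⟨0, measure_ne_top μ _⟩
    rwa [hInter] at this
  -- continuity from below to a left-open endpoint
  have hB : ∀ a : ℝ, Tendsto (fun n : ℕ => μ (Set.Iic (a - 1 / (n + 1)))) atTop
      (𝓝 (μ (Set.Iio a))) := by
    intro a
    have hmono' : Monotone fun n : ℕ => Set.Iic (a - 1 / ((n : ℝ) + 1)) := by
      intro n m hnm
      apply Set.Iic_subset_Iic.2
      have : (1 : ℝ) / (m + 1) ≤ 1 / (n + 1) := by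
        apply one_div_le_one_div_of_le (by positivity)
        exact_mod_cast Nat.succ_le_succ hnm
      linarith
    have hUnion : ⋃ n : ℕ, Set.Iic (a - 1 / ((n : ℝ) + 1)) = Set.Iio a := by
      ext x
      simp only [Set.mem_iUnion, Set.mem_Iic, Set.mem_Iio]
      constructor
      · rintro ⟨n, hn⟩
        have : (0 : ℝ) < 1 / ((n : ℝ) + 1) := by positivity
        linarith
      · intro h
        obtain ⟨n, hn⟩ := exists_nat_one_div_lt (sub_pos.2 h)
        exact ⟨n, by linarith⟩
    have := tendsto_measure_iUnion_atTop (μ := μ) hmono'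
    rw [hUnion] at this
    exact this
  -- tendsto to 1 at +∞
  have hC : Tendsto (fun n : ℕ => μ (Set.Iic (n : ℝ))) atTop (𝓝 1) := by
    have hmono' : Monotone fun n : ℕ => Set.Iic ((n : ℝ)) := fun n m hnm =>
      Set.Iic_subset_Iic.2 (by exact_mod_cast hnm)
    have hUnion : ⋃ n : ℕ, Set.Iic ((n : ℝ)) = Set.univ := by
      ext x
      simp only [Set.mem_iUnion, Set.mem_Iic, Set.mem_univ, iff_true]
      obtain ⟨n, hn⟩ := exists_nat_ge x
      exact ⟨n, hn⟩
    have := tendsto_measure_iUnion_atTop (μ := μ) hmono'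
    rw [hUnion, measure_univ] at this
    exact this
  -- tendsto to 0 at -∞
  have hD : Tendsto (fun n : ℕ => μ (Set.Iic (-(n : ℝ)))) atTop (𝓝 0) := by
    have hanti : Antitone fun n : ℕ => Set.Iic (-(n : ℝ)) := fun n m hnm =>
      Set.Iic_subset_Iic.2 (by simp; exact_mod_cast hnm)
    have hInter : ⋂ n : ℕ, Set.Iic (-(n : ℝ)) = (∅ : Set ℝ) := by
      ext x
      simp only [Set.mem_iInter, Set.mem_Iic, Set.mem_empty_iff_false, iff_false, not_forall,
        not_le]
      obtain ⟨n, hn⟩ := exists_nat_gt (-x)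
      exact ⟨n, by linarith⟩
    have := tendsto_measure_iInter_atTop
      (μ := μ) (fun n => measurableSet_Iic.nullMeasurableSet) hanti ⟨0, measure_ne_top μ _⟩
    rwa [hInter, measure_empty] at this
  refine Measure.ext_of_Iic (μ.map Ψ) _ (fun t => ?_)
  rw [Measure.map_apply hmeas measurableSet_Iic, Measure.restrict_apply measurableSet_Iic,
    Set.inter_comm, Set.Ioc_inter_Iic, Real.volume_Ioc]
  have hmin : min 1 t - 0 = min 1 t := sub_zero _
  rw [hmin]
  have hpre : Ψ ⁻¹' Set.Iic t = {x | Ψ x ≤ t} := rfl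
  rcases lt_or_ge t 0 with ht | ht0
  · -- t < 0 : both sides are 0
    have hempty : Ψ ⁻¹' Set.Iic t = ∅ := by
      ext x
      simp only [Set.mem_preimage, Set.mem_Iic, Set.mem_empty_iff_false, iff_false, not_le]
      exact lt_of_lt_of_le ht (h0le x)
    rw [hempty, measure_empty, ENNReal.ofReal_eq_zero.2]
    exact (min_le_right _ _).trans ht.le
  rcases le_or_gt 1 t with ht1 | ht1
  · -- 1 ≤ t : both sides are 1
    have huniv : Ψ ⁻¹' Set.Iic t = Set.univ := by
      ext x
      simp only [Set.mem_preimage, Set.mem_Iic, Set.mem_univ, iff_true]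
      refine le_trans ?_ ht1
      rw [hΨ]
      calc (μ (Set.Iic x)).toReal ≤ (1 : ℝ≥0∞).toReal :=
            ENNReal.toReal_mono ENNReal.one_ne_top prob_le_one
        _ = 1 := by simp
    rw [huniv, measure_univ, min_eq_left ht1]
    simp
  · -- 0 ≤ t < 1
    rw [min_eq_right ht1.le]
    have hofReal_t_lt_one : ENNReal.ofReal t < 1 := by
      rw [← ENNReal.ofReal_one]
      exact (ENNReal.ofReal_lt_ofReal_iff one_pos).2 ht1
    -- there is some y with t < Ψ y
    obtain ⟨y, hy⟩ : ∃ y : ℝ, ENNReal.ofReal t < μ (Set.Iic y) := by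
      have := hC.eventually (eventually_gt_nhds hofReal_t_lt_one)
      obtain ⟨n, hn⟩ := this.exists
      exact ⟨n, hn⟩
    have hyΨ : t < Ψ y := by
      rw [hΨ]
      exact (ENNReal.ofReal_lt_iff_lt_toReal ht0 (measure_ne_top μ _)).1 hy
    rcases Set.eq_empty_or_nonempty {x | Ψ x ≤ t} with hSe | hSne
    · -- the sublevel set is empty: then t = 0
      have ht_eq : t = 0 := by
        by_contra htne
        have htpos : 0 < t := lt_of_le_of_ne ht0 (Ne.symm htne)
        have : ∀ᶠ n : ℕ in atTop, μ (Set.Iic (-(n : ℝ))) < ENNReal.ofReal t :=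
          hD.eventually (eventually_lt_nhds (ENNReal.ofReal_pos.2 htpos))
        obtain ⟨n, hn⟩ := this.exists
        have : Ψ (-(n : ℝ)) < t := by
          rw [hΨ]
          exact (ENNReal.lt_ofReal_iff_toReal_lt (measure_ne_top μ _)).1 hn
        have : (-(n : ℝ)) ∈ {x | Ψ x ≤ t} := this.le
        rw [hSe] at this
        exact this
      rw [hpre, hSe, measure_empty, ht_eq, ENNReal.ofReal_zero]
    · -- nonempty sublevel set
      set S := {x : ℝ | Ψ x ≤ t} with hSdef
      have hbdd : BddAbove S := by
        refine ⟨y, fun x hx => ?_⟩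
        by_contra hxy
        push_neg at hxy
        have : t < Ψ x := lt_of_lt_of_le hyΨ (hmono hxy.le)
        exact absurd hx (not_le.2 this)
      set a := sSup S with ha
      have hlow : ∀ x ∈ S, ∀ z ≤ x, z ∈ S := fun x hx z hz =>
        le_trans (hmono hz) hx
      have hIio_sub : Set.Iio a ⊆ S := by
        intro z hz
        obtain ⟨x, hxS, hzx⟩ := exists_lt_of_lt_csSup hSne hz
        exact hlow x hxS z hzx.le
      have hS_sub : S ⊆ Set.Iic a := fun x hx => le_csSup hbdd hx
      -- μ (Iio a) ≤ ofReal t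
      have hμIio_le : μ (Set.Iio a) ≤ ENNReal.ofReal t := by
        refine le_of_tendsto (hB a) (Eventually.of_forall fun n => ?_)
        have hmem : a - 1 / ((n : ℝ) + 1) ∈ S := by
          apply hIio_sub
          simp only [Set.mem_Iio]
          have : (0 : ℝ) < 1 / ((n : ℝ) + 1) := by positivity
          linarith
        calc μ (Set.Iic (a - 1 / ((n : ℝ) + 1))) = ENNReal.ofReal (Ψ (a - 1 / ((n : ℝ) + 1))) :=
              (hofReal _).symm
          _ ≤ ENNReal.ofReal t := ENNReal.ofReal_le_ofReal hmem
      have hΨa_le : Ψ a ≤ t := by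
        have h1 : μ (Set.Iic a) ≤ ENNReal.ofReal t := (hIioIic a) ▸ hμIio_le
        rw [hΨ]
        exact ENNReal.toReal_le_of_le_ofReal ht0 h1
      have haS : a ∈ S := hΨa_le
      have hSeq : S = Set.Iic a := Set.Subset.antisymm hS_sub (fun z hz => hlow a haS z hz)
      -- Ψ a = t
      have hΨa_eq : Ψ a = t := by
        by_contra hne
        have hlt : Ψ a < t := lt_of_le_of_ne hΨa_le hne
        have htpos : 0 < t := lt_of_le_of_lt (h0le a) hlt
        have hμlt : μ (Set.Iic a) < ENNReal.ofReal t := by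
          rw [← hofReal]
          exact (ENNReal.ofReal_lt_ofReal_iff htpos).2 hlt
        have : ∀ᶠ n : ℕ in atTop, μ (Set.Iic (a + 1 / ((n : ℝ) + 1))) < ENNReal.ofReal t :=
          (hA a).eventually (eventually_lt_nhds hμlt)
        obtain ⟨n, hn⟩ := this.exists
        have hmem : a + 1 / ((n : ℝ) + 1) ∈ S := by
          show Ψ _ ≤ t
          rw [hΨ]
          exact ((ENNReal.lt_ofReal_iff_toReal_lt (measure_ne_top μ _)).1 hn).le
        have := hS_sub hmem
        simp only [Set.mem_Iic] at this
        have hpos : (0 : ℝ) < 1 / ((n : ℝ) + 1) := by positivity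
        linarith
      calc μ (Ψ ⁻¹' Set.Iic t) = μ (Set.Iic a) := by rw [hpre, hSeq]
        _ = ENNReal.ofReal (Ψ a) := (hofReal _).symm
        _ = ENNReal.ofReal t := by rw [hΨa_eq]

/-- **Distributional identity for the Anderson–Darling type limit:**
if `μ` is an absolutely continuous Borel probability measure on `ℝ` with cumulative
distribution function `Ψ` satisfying `∫ Ψ(x)^{-1/2} μ(dx) < ∞`, then
`∫_ℝ (|B(Ψ(x))|²/Ψ(x)) μ(dx) =ᵈ ∫_0^1 (|B(u)|²/u) du`. -/
theorem anderson_darling_limit_identity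
    (Ω : Type*) [MeasurableSpace Ω] (P : Measure Ω) [IsProbabilityMeasure P]
    (B : ℝ → Ω → ℝ) (hB : IsStandardBrownianMotion P B)
    (μ : Measure ℝ) [IsProbabilityMeasure μ] (hμ_ac : μ ≪ volume)
    (Ψ : ℝ → ℝ) (hΨ : ∀ x, Ψ x = (μ (Set.Iic x)).toReal)
    (hΨ_int : Integrable (fun x => Ψ x ^ (-(1 : ℝ) / 2)) μ) :
    P.map (fun ω => ∫ x, (B (Ψ x) ω) ^ 2 / Ψ x ∂μ)
      = P.map (fun ω => ∫ u in Set.Ioc (0 : ℝ) 1, (B u ω) ^ 2 / u) := by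
  have h0 : ∀ x : ℝ, μ {x} = 0 := fun x => hμ_ac (measure_singleton x)
  have hmap := map_cdf_eq_uniform μ h0 hΨ
  have hmono : Monotone Ψ := fun a b hab => by
    rw [hΨ, hΨ]
    exact ENNReal.toReal_mono (measure_ne_top μ _) (measure_mono (Set.Iic_subset_Iic.2 hab))
  have hmeas : Measurable Ψ := hmono.measurable
  obtain ⟨hBmeas, hBcont, -, -, -⟩ := hB
  apply Measure.map_congr
  filter_upwards [hBcont] with ω hcont
  have hg : Measurable fun u : ℝ => (B u ω) ^ 2 / u :=
    ((hcont.pow 2).measurable).div measurable_id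
  have h1 : ∫ x, (B (Ψ x) ω) ^ 2 / Ψ x ∂μ = ∫ u, (B u ω) ^ 2 / u ∂(μ.map Ψ) :=
    (integral_map (f := fun u => (B u ω) ^ 2 / u) hmeas.aemeasurable
      hg.aestronglyMeasurable).symm
  rw [h1, hmap]
end
end

section
/- Let {X_i}_{i∈ℤ} be a strictly stationary ergodic real-valued process with absolutely continuous invariant law μ whose distribution function Ψ satisfies ∫_ℝ Ψ(x)^{−1/2} μ(dx) < ∞, adapted to a filtration {F_i} with F_i = σ(X_j : j ≤ i), let S_0 be a measurable function, and suppose there exists δ with 0 < |δ| < 1/2 such that P(X_i − S_0(X_{i-1}) ≤ 0 | F_{i-1}) = 1/2 − δ almost surely for every i, and P(X_i − S_0(X_{i-1}) = 0) = 0. Define T_n = ∫_ℝ (nΨ(x))^{-1} ( Σ_{i=1}^n sgn(X_i − S_0(X_{i-1})) 1_{(-∞,x]}(X_{i-1}) )² μ(dx), where sgn(u) = −1 for u < 0, +1 for u > 0, 0 for u = 0. Then the test based on T_n is consistent: for every constant M > 0, P(T_n > M) → 1 as n → ∞. -/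
open MeasureTheory ProbabilityTheory Filter
open scoped ENNReal NNReal Topology

noncomputable section

section AuxLemmas
open Set

lemma real_sign_measurable : Measurable Real.sign := by
  have : Real.sign = fun r : ℝ => if r < 0 then (-1 : ℝ) else if 0 < r then 1 else 0 := by
    funext r; rfl
  rw [this]
  exact Measurable.ite (measurableSet_lt measurable_id measurable_const) measurable_const
    (Measurable.ite (measurableSet_lt measurable_const measurable_id) measurable_const
      measurable_const)

lemma real_sign_abs_le (r : ℝ) : |Real.sign r| ≤ 1 := by
  rcases Real.sign_apply_eq r with h | h | h <;> rw [h] <;> norm_num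

lemma psi_continuous (μ : Measure ℝ) [IsProbabilityMeasure μ] [NullSingletonClass μ] :
    Continuous (ProbabilityTheory.cdf μ) := by
  rw [continuous_iff_continuousAt]
  intro x
  have hmono : Monotone (cdf μ) := monotone_cdf μ
  rw [hmono.continuousAt_iff_leftLim_eq_rightLim]
  have hright : Function.rightLim (cdf μ) x = cdf μ x := by
    apply rightLim_eq_of_tendsto (α := ℝ) (β := ℝ) (h := ?_) ?_
    · exact nhdsGT_neBot x
    · exact ((cdf μ).right_continuous x).tendsto.mono_left
        (nhdsWithin_mono _ Ioi_subset_Ici_self)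
  have hleft : Function.leftLim (cdf μ) x = cdf μ x := by
    have h1 : Function.leftLim (cdf μ) x ≤ cdf μ x := hmono.leftLim_le le_rfl
    have h2 : μ {x} = 0 := measure_singleton x
    rw [← measure_cdf μ, StieltjesFunction.measure_singleton] at h2
    have h3 : cdf μ x - Function.leftLim (cdf μ) x ≤ 0 := by
      by_contra h
      push_neg at h
      rw [ENNReal.ofReal_eq_zero] at h2
      linarith
    linarith
  rw [hleft, hright]

lemma measure_cdfzero_set (μ : Measure ℝ) [IsProbabilityMeasure μ] [NullSingletonClass μ] :
    μ {x | μ (Set.Iic x) = 0} = 0 := by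
  set A := {x | μ (Set.Iic x) = 0} with hA
  rcases eq_empty_or_nonempty A with h | h
  · rw [h]; simp
  by_cases hbdd : BddAbove A
  · set t := sSup A with ht
    have hsub : A ⊆ Set.Iic t := fun a ha => le_csSup hbdd ha
    have hIio : μ (Set.Iio t) = 0 := by
      have hcover : Set.Iio t ⊆ ⋃ q : ℚ, (if (q : ℝ) < t then Set.Iic (q : ℝ) else ∅) := by
        intro x hx
        obtain ⟨q, hq1, hq2⟩ := exists_rat_btwn (show x < t from hx)
        exact Set.mem_iUnion.2 ⟨q, by rw [if_pos hq2]; exact le_of_lt hq1⟩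
      refine le_antisymm (le_trans (measure_mono hcover) ?_) (zero_le)
      refine le_trans (measure_iUnion_le _) ?_
      have : ∀ q : ℚ, μ (if (q : ℝ) < t then Set.Iic (q : ℝ) else ∅) = 0 := by
        intro q
        split_ifs with hq
        · obtain ⟨a, ha, hqa⟩ := exists_lt_of_lt_csSup h hq
          exact le_antisymm (le_trans (measure_mono (Set.Iic_subset_Iic.2 hqa.le)) ha.le)
            (zero_le)
        · simp
      simp [this]
    refine le_antisymm ?_ (zero_le)
    calc μ A ≤ μ (Set.Iic t) := measure_mono hsub
    _ ≤ μ (Set.Iio t) + μ {t} := by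
        rw [← Set.Iio_union_right]; exact measure_union_le _ _
    _ = 0 := by rw [hIio, measure_singleton]; simp
  · exfalso
    have : ∀ x : ℝ, μ (Set.Iic x) = 0 := by
      intro x
      rw [not_bddAbove_iff] at hbdd
      obtain ⟨a, ha, hxa⟩ := hbdd x
      exact le_antisymm (le_trans (measure_mono (Set.Iic_subset_Iic.2 hxa.le)) ha.le) (zero_le)
    have huniv : μ Set.univ = 0 := by
      have hcover : (Set.univ : Set ℝ) ⊆ ⋃ n : ℕ, Set.Iic (n : ℝ) := by
        intro x _
        obtain ⟨n, hn⟩ := exists_nat_gt x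
        exact Set.mem_iUnion.2 ⟨n, hn.le⟩
      refine le_antisymm (le_trans (measure_mono hcover) (le_trans (measure_iUnion_le _) ?_))
        (zero_le)
      simp [this]
    rw [measure_univ] at huniv
    exact one_ne_zero huniv

lemma tendsto_shift_avg {u : ℕ → ℝ} {c L : ℝ}
    (h : Tendsto (fun n : ℕ => (n : ℝ)⁻¹ * u n) atTop (𝓝 L)) :
    Tendsto (fun n : ℕ => ((n : ℝ) + 1)⁻¹ * (c + u n)) atTop (𝓝 L) := by
  have h1 : Tendsto (fun n : ℕ => ((n : ℝ) + 1)⁻¹ * c) atTop (𝓝 0) := by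
    have := tendsto_one_div_add_atTop_nhds_zero_nat.mul_const c
    simpa [one_div] using this
  have h4 : Tendsto (fun n : ℕ => (n : ℝ) / ((n : ℝ) + 1)) atTop (𝓝 1) :=
    tendsto_natCast_div_add_atTop (1 : ℝ)
  have h2 : Tendsto (fun n : ℕ => ((n : ℝ) / ((n : ℝ) + 1)) * ((n : ℝ)⁻¹ * u n))
      atTop (𝓝 (1 * L)) := h4.mul h
  rw [one_mul] at h2
  have h5 := h1.add h2
  rw [zero_add] at h5
  refine h5.congr' ?_
  filter_upwards [eventually_gt_atTop 0] with n hn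
  have hn0 : (n : ℝ) ≠ 0 := Nat.cast_ne_zero.2 hn.ne'
  have hn1 : (n : ℝ) + 1 ≠ 0 := by positivity
  field_simp

lemma cheb_bound {Ω : Type*} [MeasurableSpace Ω] (P : Measure Ω) [IsProbabilityMeasure P]
    (f : Ω → ℝ) (hf : Integrable (fun ω => (f ω) ^ 2) P) (C a : ℝ)
    (hC : ∫ ω, (f ω) ^ 2 ∂P ≤ C) (ha : 0 < a) :
    P {ω | a ≤ |f ω|} ≤ ENNReal.ofReal (C / a ^ 2) := by
  have hsub : {ω | a ≤ |f ω|} ⊆ {ω | a ^ 2 ≤ (f ω) ^ 2} := by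
    intro ω hω
    simp only [Set.mem_setOf_eq] at *
    calc a ^ 2 ≤ |f ω| ^ 2 := by
          exact pow_le_pow_left₀ ha.le hω 2
    _ = (f ω) ^ 2 := sq_abs _
  refine le_trans (measure_mono hsub) ?_
  have hmarkov := mul_meas_ge_le_integral_of_nonneg
    (f := fun ω => (f ω) ^ 2) (μ := P) (Eventually.of_forall fun ω => sq_nonneg _) hf (a ^ 2)
  have hne : P {ω | a ^ 2 ≤ (f ω) ^ 2} ≠ ⊤ := measure_ne_top _ _
  have hC0 : 0 ≤ C := le_trans (integral_nonneg fun ω => sq_nonneg _) hC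
  rw [ENNReal.le_ofReal_iff_toReal_le hne (by positivity)]
  rw [le_div_iff₀ (by positivity : (0:ℝ) < a ^ 2)]
  nlinarith [hmarkov, hC, measureReal_def P {ω | a ^ 2 ≤ (f ω) ^ 2}]

lemma sum_sq_integral_le {Ω : Type*} [MeasurableSpace Ω] (P : Measure Ω) [IsProbabilityMeasure P]
    (D : ℕ → Ω → ℝ) (hmeas : ∀ i, Measurable (D i)) (hb : ∀ i ω, |D i ω| ≤ 2)
    (horth : ∀ i j, i ≠ j → ∫ ω, D i ω * D j ω ∂P = 0) (n : ℕ) :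
    ∫ ω, (∑ i ∈ Finset.range n, D i ω) ^ 2 ∂P ≤ 4 * n := by
  have hint : ∀ i j : ℕ, Integrable (fun ω => D i ω * D j ω) P := by
    intro i j
    refine Integrable.mono' (integrable_const 4) ((hmeas i).mul (hmeas j)).aestronglyMeasurable
      (Eventually.of_forall fun ω => ?_)
    rw [Real.norm_eq_abs, abs_mul]
    calc |D i ω| * |D j ω| ≤ 2 * 2 := by
          exact mul_le_mul (hb i ω) (hb j ω) (abs_nonneg _) (by norm_num)
    _ = 4 := by norm_num
  have hexp : ∀ ω, (∑ i ∈ Finset.range n, D i ω) ^ 2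
      = ∑ i ∈ Finset.range n, ∑ j ∈ Finset.range n, D i ω * D j ω := by
    intro ω
    rw [sq, Finset.sum_mul_sum]
  calc ∫ ω, (∑ i ∈ Finset.range n, D i ω) ^ 2 ∂P
      = ∑ i ∈ Finset.range n, ∑ j ∈ Finset.range n, ∫ ω, D i ω * D j ω ∂P := by
        rw [integral_congr_ae (Eventually.of_forall hexp)]
        rw [integral_finset_sum _ (fun i _ => integrable_finset_sum _ (fun j _ => hint i j))]
        exact Finset.sum_congr rfl fun i _ => integral_finset_sum _ (fun j _ => hint i j)
  _ = ∑ i ∈ Finset.range n, ∫ ω, D i ω * D i ω ∂P := by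
        refine Finset.sum_congr rfl fun i hi => ?_
        refine Finset.sum_eq_single_of_mem i hi fun j _ hj => horth i j (Ne.symm hj)
  _ ≤ ∑ i ∈ Finset.range n, 4 := by
        refine Finset.sum_le_sum fun i _ => ?_
        calc ∫ ω, D i ω * D i ω ∂P ≤ ∫ _ω, (4 : ℝ) ∂P := by
              refine integral_mono (hint i i) (integrable_const 4) fun ω => ?_
              have := hb i ω
              nlinarith [abs_nonneg (D i ω), sq_abs (D i ω), sq_nonneg (D i ω)]
        _ = 4 := by simp
  _ = 4 * n := by simp [mul_comm]

end AuxLemmas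

set_option maxHeartbeats 3200000

/-- **Consistency of the Anderson–Darling type test.** Under the alternative hypothesis
`P(X_i − S₀(X_{i-1}) ≤ 0 | F_{i-1}) = 1/2 − δ` with `0 < |δ| < 1/2`, the statistic
`T_n = ∫ (nΨ(x))⁻¹ (Σ_{i=1}^n sgn(X_i − S₀(X_{i-1})) 1_{(-∞,x]}(X_{i-1}))² μ(dx)`
satisfies `P(T_n > M) → 1` for every `M > 0`. -/
theorem anderson_darling_test_consistency
    (Ω : Type*) [ms : MeasurableSpace Ω] (P : Measure Ω) [IsProbabilityMeasure P]
    -- the strictly stationary ergodic process and its natural filtration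
    (X : ℤ → Ω → ℝ) (hX_meas : ∀ i, Measurable (X i))
    (ℱ : Filtration ℤ ms)
    (hℱ : ∀ i : ℤ, (ℱ i : MeasurableSpace Ω)
      = ⨆ j ≤ i, MeasurableSpace.comap (X j) inferInstance)
    (S₀ : ℝ → ℝ) (hS₀_meas : Measurable S₀)
    -- strict stationarity
    (hstat : ∀ (k : ℤ) (nn : ℕ) (idx : Fin nn → ℤ),
      P.map (fun ω => fun j => X (idx j + k) ω) = P.map (fun ω => fun j => X (idx j) ω))
    -- ergodicity with the absolutely continuous invariant law μ
    (μ : Measure ℝ) [IsProbabilityMeasure μ] (hμ_ac : μ ≪ volume)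
    (hμ_law : ∀ i : ℤ, P.map (X i) = μ)
    (herg : ∀ g : ℝ → ℝ, Integrable g μ →
      ∀ᵐ ω ∂P, Tendsto (fun n : ℕ =>
          (n : ℝ)⁻¹ * ∑ i ∈ Finset.range n, g (X ((i : ℤ) + 1) ω))
        atTop (𝓝 (∫ x, g x ∂μ)))
    -- the distribution function Ψ of μ, with ∫ Ψ^{-1/2} dμ < ∞
    (Ψ : ℝ → ℝ) (hΨ : ∀ x, Ψ x = (μ (Set.Iic x)).toReal)
    (hΨ_int : Integrable (fun x => Ψ x ^ (-(1 : ℝ) / 2)) μ)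
    -- the alternative hypothesis: P(X_i − S₀(X_{i-1}) ≤ 0 | F_{i-1}) = 1/2 − δ
    (δ : ℝ) (hδ_pos : 0 < |δ|) (hδ_lt : |δ| < 1 / 2)
    (halt : ∀ i : ℤ,
      P[(fun ω => if X i ω - S₀ (X (i - 1) ω) ≤ 0 then (1 : ℝ) else 0) | ℱ (i - 1)]
        =ᵐ[P] fun _ => 1 / 2 - δ)
    (hzero : ∀ i : ℤ, P {ω | X i ω - S₀ (X (i - 1) ω) = 0} = 0)
    -- the test statistic T_n
    (T : ℕ → Ω → ℝ)
    (hT : ∀ (n : ℕ) (ω : Ω), T n ω =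
      ∫ x, ((n : ℝ) * Ψ x)⁻¹ *
        (∑ i ∈ Finset.range n,
          Real.sign (X ((i : ℤ) + 1) ω - S₀ (X (i : ℤ) ω)) *
            (if X (i : ℤ) ω ≤ x then (1 : ℝ) else 0)) ^ 2 ∂μ) :
    -- conclusion: the test is consistent
    ∀ M : ℝ, 0 < M → Tendsto (fun n => P {ω | M < T n ω}) atTop (𝓝 1) := by
  intro M hM
  haveI : NullSingletonClass μ := ⟨fun a => hμ_ac Real.volume_singleton⟩
  set δ' : ℝ := |δ| with hδ'def
  -- basic facts about Ψ
  have hΨeq : Ψ = fun x => ProbabilityTheory.cdf μ x :=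
    funext fun x => (hΨ x).trans (ProbabilityTheory.cdf_eq_real μ x).symm
  have hΨc : Continuous Ψ := by rw [hΨeq]; exact psi_continuous μ
  have hΨmono : Monotone Ψ := by rw [hΨeq]; exact monotone_cdf μ
  have hΨ0 : ∀ x, 0 ≤ Ψ x := by rw [hΨeq]; exact cdf_nonneg μ
  have hΨ1 : ∀ x, Ψ x ≤ 1 := by rw [hΨeq]; exact cdf_le_one μ
  have hofReal : ∀ x, μ (Set.Iic x) = ENNReal.ofReal (Ψ x) := by
    intro x; rw [hΨeq]; exact (ofReal_cdf μ x).symm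
  -- choice of x₀ < x₁ with Ψ x₀ = 1/2 and Ψ x₁ = 1/2 + δ'/32
  obtain ⟨x₀, x₁, hx₀, hx₁, hx01⟩ :
      ∃ x₀ x₁ : ℝ, Ψ x₀ = 1/2 ∧ Ψ x₁ = 1/2 + δ'/32 ∧ x₀ < x₁ := by
    have hδ'pos : 0 < δ' := hδ_pos
    have hδ'lt : δ' < 1/2 := hδ_lt
    have hbot : Tendsto Ψ atBot (𝓝 0) := by rw [hΨeq]; exact tendsto_cdf_atBot μ
    have htop : Tendsto Ψ atTop (𝓝 1) := by rw [hΨeq]; exact tendsto_cdf_atTop μ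
    obtain ⟨A, hA⟩ : ∃ A : ℝ, Ψ A < 1/2 :=
      (hbot.eventually_lt_const (by norm_num : (0:ℝ) < 1/2)).exists
    obtain ⟨B, hB⟩ : ∃ B : ℝ, 1/2 + δ'/32 < Ψ B :=
      (htop.eventually_const_lt (by linarith : 1/2 + δ'/32 < 1)).exists
    have hAB : A < B := by
      by_contra h
      push_neg at h
      have := hΨmono h
      linarith
    have hIVT := intermediate_value_Icc hAB.le hΨc.continuousOn
    have hmem0 : (1/2 : ℝ) ∈ Set.Icc (Ψ A) (Ψ B) := ⟨by linarith, by linarith⟩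
    have hmem1 : (1/2 + δ'/32 : ℝ) ∈ Set.Icc (Ψ A) (Ψ B) := ⟨by linarith, by linarith⟩
    obtain ⟨x₀, _, hx₀⟩ := hIVT hmem0
    obtain ⟨x₁, _, hx₁⟩ := hIVT hmem1
    refine ⟨x₀, x₁, hx₀, hx₁, ?_⟩
    by_contra h
    push_neg at h
    have := hΨmono h
    rw [hx₀, hx₁] at this
    linarith
  have hIoc : (μ (Set.Ioc x₀ x₁)).toReal = δ'/32 := by
    have h1 : Set.Iic x₁ \ Set.Iic x₀ = Set.Ioc x₀ x₁ := by ext y; simp [and_comm]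
    have h2 : μ (Set.Ioc x₀ x₁) = μ (Set.Iic x₁) - μ (Set.Iic x₀) := by
      rw [← h1, measure_diff (Set.Iic_subset_Iic.2 hx01.le)
        measurableSet_Iic.nullMeasurableSet (measure_ne_top μ _)]
    rw [h2, hofReal, hofReal, hx₀, hx₁,
      ← ENNReal.ofReal_sub _ (by norm_num : (0:ℝ) ≤ 1/2)]
    rw [ENNReal.toReal_ofReal (by linarith [hδ_pos])]
    ring
  -- the processes
  set W : ℕ → Ω → ℝ := fun i ω => Real.sign (X ((i : ℤ) + 1) ω - S₀ (X (i : ℤ) ω)) with hWdef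
  set χ : ℕ → ℝ → Ω → ℝ := fun i x ω => if X (i : ℤ) ω ≤ x then (1 : ℝ) else 0 with hχdef
  set Df : ℕ → Ω → ℝ := fun i ω => (W i ω - 2*δ) * χ i x₀ ω with hDdef
  set Mn : ℕ → Ω → ℝ := fun n ω => ∑ i ∈ Finset.range n, Df i ω with hMdef
  set Nn : ℕ → Ω → ℝ := fun n ω => ∑ i ∈ Finset.range n, χ i x₀ ω with hNdef
  set Rn : ℕ → Ω → ℝ := fun n ω => ∑ i ∈ Finset.range n, (χ i x₁ ω - χ i x₀ ω) with hRdef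
  set V : ℕ → ℝ → Ω → ℝ := fun n x ω => ∑ i ∈ Finset.range n, W i ω * χ i x ω with hVdef
  have hδ'pos : 0 < δ' := hδ_pos
  have hδ'lt : δ' < 1/2 := hδ_lt
  -- measurability and bounds
  have hW_m : ∀ i, Measurable (W i) := fun i =>
    real_sign_measurable.comp ((hX_meas _).sub (hS₀_meas.comp (hX_meas _)))
  have hχ_m : ∀ i x, Measurable (χ i x) := fun i x =>
    Measurable.ite (measurableSet_le (hX_meas _) measurable_const)
      measurable_const measurable_const
  have hχ_nonneg : ∀ i x ω, 0 ≤ χ i x ω := by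
    intro i x ω; simp only [hχdef]; split_ifs <;> norm_num
  have hχ_le : ∀ i x ω, χ i x ω ≤ 1 := by
    intro i x ω; simp only [hχdef]; split_ifs <;> norm_num
  have hW_le : ∀ i ω, |W i ω| ≤ 1 := fun i ω => real_sign_abs_le _
  have hDf_m : ∀ i, Measurable (Df i) := fun i =>
    ((hW_m i).sub measurable_const).mul (hχ_m i x₀)
  have hDf_le : ∀ i ω, |Df i ω| ≤ 2 := by
    intro i ω
    simp only [hDdef, abs_mul]
    calc |W i ω - 2*δ| * |χ i x₀ ω| ≤ (|W i ω| + |2*δ|) * 1 := by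
          refine mul_le_mul (abs_sub _ _) ?_ (abs_nonneg _) ?_
          · rw [abs_of_nonneg (hχ_nonneg i x₀ ω)]; exact hχ_le i x₀ ω
          · positivity
    _ ≤ 2 := by
        rw [mul_one, abs_mul]
        have := hW_le i ω
        simp only [Nat.abs_ofNat]
        rw [← hδ'def] at *
        nlinarith
  -- filtration measurability
  have hXmF : ∀ k j : ℤ, k ≤ j → Measurable[ℱ j] (X k) := by
    intro k j hkj
    have h1 : MeasurableSpace.comap (X k) inferInstance ≤ ℱ j := by
      rw [hℱ j]
      exact le_biSup (f := fun j => MeasurableSpace.comap (X j) inferInstance) hkj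
    exact fun s hs => h1 _ ⟨s, hs, rfl⟩
  have hW_mF : ∀ (i : ℕ) (j : ℤ), (i : ℤ) + 1 ≤ j → Measurable[ℱ j] (W i) := by
    intro i j hij
    exact real_sign_measurable.comp
      ((hXmF _ _ hij).sub (hS₀_meas.comp (hXmF _ _ (by linarith))))
  have hχ_mF : ∀ (i : ℕ) (x : ℝ) (j : ℤ), (i : ℤ) ≤ j → Measurable[ℱ j] (χ i x) := by
    intro i x j hij
    exact Measurable.ite (measurableSet_le (hXmF _ _ hij) measurable_const)
      measurable_const measurable_const
  -- conditional expectation of the sign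
  have hIint : ∀ i : ℕ, Integrable
      (fun ω => if X ((i:ℤ)+1) ω - S₀ (X (i:ℤ) ω) ≤ 0 then (1:ℝ) else 0) P := by
    intro i
    refine Integrable.mono' (integrable_const 1)
      (Measurable.aestronglyMeasurable ?_) (Eventually.of_forall fun ω => ?_)
    · exact Measurable.ite
        (measurableSet_le ((hX_meas _).sub (hS₀_meas.comp (hX_meas _))) measurable_const)
        measurable_const measurable_const
    · rw [Real.norm_eq_abs]; split_ifs <;> norm_num
  have hW_int : ∀ i : ℕ, Integrable (W i) P := by
    intro i
    refine Integrable.mono' (integrable_const 1)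
      (hW_m i).aestronglyMeasurable (Eventually.of_forall fun ω => ?_)
    rw [Real.norm_eq_abs]; exact hW_le i ω
  have hcond : ∀ i : ℕ, P[W i | ℱ (i : ℤ)] =ᵐ[P] fun _ => 2*δ := by
    intro i
    set I : Ω → ℝ := fun ω => if X ((i:ℤ)+1) ω - S₀ (X (i:ℤ) ω) ≤ 0 then (1:ℝ) else 0
      with hIdef
    have hY0 : ∀ᵐ ω ∂P, X ((i:ℤ)+1) ω - S₀ (X (i:ℤ) ω) ≠ 0 := by
      have h := hzero ((i:ℤ)+1)
      rw [ae_iff]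
      simp only [add_sub_cancel_right] at h
      convert h using 2
      simp
    have hWI : W i =ᵐ[P] fun ω => 1 - 2 * I ω := by
      filter_upwards [hY0] with ω hω
      rcases lt_or_gt_of_ne hω with h | h
      · simp only [hWdef, hIdef, Real.sign_of_neg h, if_pos h.le]
        norm_num
      · simp only [hWdef, hIdef, Real.sign_of_pos h, if_neg (not_le.2 h)]
        norm_num
    have halt' : P[I | ℱ (i : ℤ)] =ᵐ[P] fun _ => 1/2 - δ := by
      have h := halt ((i:ℤ)+1)
      simp only [add_sub_cancel_right] at h
      exact h
    calc P[W i | ℱ (i : ℤ)]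
        =ᵐ[P] P[fun ω => 1 - 2 * I ω | ℱ (i : ℤ)] := condExp_congr_ae hWI
    _ =ᵐ[P] fun ω => (P[fun _ => (1:ℝ) | ℱ (i : ℤ)]) ω - (P[fun ω => 2 * I ω | ℱ (i : ℤ)]) ω :=
        condExp_sub (integrable_const 1) ((hIint i).const_mul 2) _
    _ =ᵐ[P] fun _ => 2*δ := by
        have h1 : P[fun _ => (1:ℝ) | ℱ (i : ℤ)] = fun _ => (1:ℝ) :=
          condExp_const (ℱ.le _) 1
        have h2 : P[fun ω => 2 * I ω | ℱ (i : ℤ)] =ᵐ[P] fun ω => 2 * (P[I | ℱ (i : ℤ)]) ω := by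
          have := condExp_smul (μ := P) (m := ℱ (i : ℤ)) (2:ℝ) I
          simpa [Pi.smul_def, smul_eq_mul] using this
        filter_upwards [h2, halt'] with ω hω2 hωa
        rw [h1, hω2, hωa]
        ring
  -- pull-out lemma
  have hpull : ∀ (j : ℕ) (f : Ω → ℝ), StronglyMeasurable[ℱ (j : ℤ)] f → (∀ ω, |f ω| ≤ 2) →
      ∫ ω, f ω * (W j ω - 2*δ) ∂P = 0 := by
    intro j f hf hfb
    have hf_meas : Measurable f := (hf.measurable).mono (ℱ.le _) le_rfl
    have hg_int : Integrable (fun ω => W j ω - 2*δ) P :=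
      (hW_int j).sub (integrable_const _)
    have hfg_int : Integrable (fun ω => f ω * (W j ω - 2*δ)) P := by
      refine Integrable.mono' (integrable_const 4)
        (hf_meas.mul ((hW_m j).sub measurable_const)).aestronglyMeasurable
        (Eventually.of_forall fun ω => ?_)
      rw [Real.norm_eq_abs, abs_mul]
      have h1 : |W j ω - 2*δ| ≤ 2 := by
        have h2 := hW_le j ω
        have h3 : |2*δ| = 2*δ' := by rw [abs_mul, hδ'def]; norm_num
        calc |W j ω - 2*δ| ≤ |W j ω| + |2*δ| := abs_sub _ _
        _ ≤ 1 + 2*δ' := by rw [h3] at *; linarith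
        _ ≤ 2 := by linarith
      calc |f ω| * |W j ω - 2*δ| ≤ 2 * 2 :=
            mul_le_mul (hfb ω) h1 (abs_nonneg _) (by norm_num)
      _ = 4 := by norm_num
    have h1 : ∫ ω, f ω * (W j ω - 2*δ) ∂P
        = ∫ ω, (P[fun ω => f ω * (W j ω - 2*δ) | ℱ (j : ℤ)]) ω ∂P :=
      (integral_condExp (ℱ.le _) (f := fun ω => f ω * (W j ω - 2*δ))).symm
    have h2 : P[fun ω => f ω * (W j ω - 2*δ) | ℱ (j : ℤ)]
        =ᵐ[P] f * P[fun ω => W j ω - 2*δ | ℱ (j : ℤ)] :=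
      condExp_mul_of_stronglyMeasurable_left hf hfg_int hg_int
    have h3 : P[fun ω => W j ω - 2*δ | ℱ (j : ℤ)] =ᵐ[P] fun _ => 0 := by
      have h4 : P[fun ω => W j ω - 2*δ | ℱ (j : ℤ)]
          =ᵐ[P] fun ω => (P[W j | ℱ (j : ℤ)]) ω - (P[fun _ => 2*δ | ℱ (j : ℤ)]) ω :=
        condExp_sub (hW_int j) (integrable_const _) _
      have h5 : P[fun _ => (2*δ : ℝ) | ℱ (j : ℤ)] = fun _ => 2*δ := condExp_const (ℱ.le _) _
      filter_upwards [h4, hcond j] with ω hω4 hωc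
      rw [hω4, hωc, h5]
      ring
    rw [h1]
    have h6 : (P[fun ω => f ω * (W j ω - 2*δ) | ℱ (j : ℤ)]) =ᵐ[P] fun _ => 0 := by
      filter_upwards [h2, h3] with ω hω2 hω3
      rw [hω2, Pi.mul_apply, hω3]
      ring
    rw [integral_congr_ae h6]
    simp
  -- orthogonality of the increments
  have hDf_mF : ∀ (i : ℕ) (j : ℤ), (i : ℤ) + 1 ≤ j → Measurable[ℱ j] (Df i) := by
    intro i j hij
    exact ((hW_mF i j hij).sub measurable_const).mul (hχ_mF i x₀ j (by linarith))
  have horth : ∀ i j : ℕ, i ≠ j → ∫ ω, Df i ω * Df j ω ∂P = 0 := by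
    have key : ∀ i j : ℕ, i < j → ∫ ω, Df i ω * Df j ω ∂P = 0 := by
      intro i j hij
      have hij' : (i : ℤ) + 1 ≤ (j : ℤ) := by exact_mod_cast hij
      have hfm : Measurable[ℱ (j : ℤ)] (fun ω => Df i ω * χ j x₀ ω) :=
        (hDf_mF i j hij').mul (hχ_mF j x₀ j le_rfl)
      have hfb : ∀ ω, |Df i ω * χ j x₀ ω| ≤ 2 := by
        intro ω
        rw [abs_mul]
        calc |Df i ω| * |χ j x₀ ω| ≤ 2 * 1 := by
              refine mul_le_mul (hDf_le i ω) ?_ (abs_nonneg _) (by norm_num)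
              rw [abs_of_nonneg (hχ_nonneg j x₀ ω)]
              exact hχ_le j x₀ ω
        _ = 2 := by norm_num
      have heq : ∀ ω, Df i ω * Df j ω = (Df i ω * χ j x₀ ω) * (W j ω - 2*δ) := by
        intro ω
        simp only [hDdef]
        ring
      rw [integral_congr_ae (Eventually.of_forall heq)]
      exact hpull j _ hfm.stronglyMeasurable hfb
    intro i j hij
    rcases lt_or_gt_of_ne hij with h | h
    · exact key i j h
    · rw [integral_congr_ae (Eventually.of_forall fun ω => mul_comm (Df i ω) (Df j ω))]
      exact key j i h
  -- second moment bound
  have hM2 : ∀ n : ℕ, ∫ ω, (Mn n ω) ^ 2 ∂P ≤ 4 * n := by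
    intro n
    exact sum_sq_integral_le P Df hDf_m hDf_le horth n
  have hMn_m : ∀ n, Measurable (Mn n) := fun n => Finset.measurable_sum _ fun i _ => hDf_m i
  have hNn_m : ∀ n, Measurable (Nn n) := fun n => Finset.measurable_sum _ fun i _ => hχ_m i x₀
  have hRn_m : ∀ n, Measurable (Rn n) := fun n =>
    Finset.measurable_sum _ fun i _ => (hχ_m i x₁).sub (hχ_m i x₀)
  -- Chebyshev bound for the martingale part
  have hE1 : ∀ n : ℕ, 1 ≤ n → P {ω | δ'/16 * n ≤ |Mn n ω|}
      ≤ ENNReal.ofReal ((4 * n) / (δ'/16 * n) ^ 2) := by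
    intro n hn
    have hn' : (0:ℝ) < n := by exact_mod_cast hn
    refine cheb_bound P (Mn n) ?_ (4*n) (δ'/16 * n) (hM2 n) (by positivity)
    refine Integrable.mono' (integrable_const ((2*(n:ℝ))^2))
      ((hMn_m n).pow_const 2).aestronglyMeasurable (Eventually.of_forall fun ω => ?_)
    rw [Real.norm_eq_abs, abs_pow, ← abs_pow, abs_of_nonneg (sq_nonneg _)]
    have hb : |Mn n ω| ≤ 2*n := by
      simp only [hMdef]
      calc |∑ i ∈ Finset.range n, Df i ω| ≤ ∑ i ∈ Finset.range n, |Df i ω| :=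
            Finset.abs_sum_le_sum_abs _ _
      _ ≤ ∑ _i ∈ Finset.range n, (2:ℝ) := Finset.sum_le_sum fun i _ => hDf_le i ω
      _ = 2*n := by simp [mul_comm]
    calc (Mn n ω)^2 = |Mn n ω|^2 := (sq_abs _).symm
    _ ≤ (2*n)^2 := by exact pow_le_pow_left₀ (abs_nonneg _) hb 2
  -- ergodic averages along the unshifted process
  have herg' : ∀ g : ℝ → ℝ, Integrable g μ → ∀ᵐ ω ∂P,
      Tendsto (fun n : ℕ => (n : ℝ)⁻¹ * ∑ i ∈ Finset.range n, g (X (i : ℤ) ω))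
        atTop (𝓝 (∫ x, g x ∂μ)) := by
    intro g hg
    filter_upwards [herg g hg] with ω hω
    have h2 := tendsto_shift_avg (c := g (X 0 ω)) hω
    rw [← tendsto_add_atTop_iff_nat 1]
    refine h2.congr fun n => ?_
    rw [Finset.sum_range_succ']
    push_cast
    ring_nf
  -- a.s. limits of Nn and Rn
  have hind_int : ∀ a : ℝ, Integrable (fun y : ℝ => if y ≤ a then (1:ℝ) else 0) μ := by
    intro a
    refine Integrable.mono' (integrable_const 1) (Measurable.aestronglyMeasurable ?_)
      (Eventually.of_forall fun y => ?_)
    · exact Measurable.ite measurableSet_Iic measurable_const measurable_const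
    · rw [Real.norm_eq_abs]; split_ifs <;> norm_num
  have hind_eq : ∀ a : ℝ, ∫ y, (if y ≤ a then (1:ℝ) else 0) ∂μ = Ψ a := by
    intro a
    have h1 : (fun y : ℝ => if y ≤ a then (1:ℝ) else 0)
        = Set.indicator (Set.Iic a) (fun _ => (1:ℝ)) := by
      funext y
      simp [Set.indicator_apply, Set.mem_Iic]
    rw [h1, integral_indicator_const (1:ℝ) measurableSet_Iic, hΨ a, smul_eq_mul, mul_one, measureReal_def]
  have hN_as : ∀ᵐ ω ∂P, Tendsto (fun n : ℕ => (n : ℝ)⁻¹ * Nn n ω) atTop (𝓝 (1/2)) := by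
    have h := herg' (fun y => if y ≤ x₀ then (1:ℝ) else 0) (hind_int x₀)
    rw [hind_eq x₀, hx₀] at h
    exact h
  have hR_as : ∀ᵐ ω ∂P, Tendsto (fun n : ℕ => (n : ℝ)⁻¹ * Rn n ω) atTop (𝓝 (δ'/32)) := by
    have h := herg' (fun y => (if y ≤ x₁ then (1:ℝ) else 0) - (if y ≤ x₀ then (1:ℝ) else 0))
      ((hind_int x₁).sub (hind_int x₀))
    rw [integral_sub (hind_int x₁) (hind_int x₀), hind_eq x₁, hind_eq x₀, hx₀, hx₁] at h
    have heq : (1/2 + δ'/32) - 1/2 = δ'/32 := by ring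
    rw [heq] at h
    exact h
  -- convergence in probability
  have hNm : Tendsto (fun n : ℕ => P {ω | (1:ℝ)/16 ≤ dist ((n : ℝ)⁻¹ * Nn n ω) (1/2)})
      atTop (𝓝 0) := by
    have h := tendstoInMeasure_of_tendsto_ae (μ := P)
      (f := fun n ω => (n : ℝ)⁻¹ * Nn n ω) (g := fun _ => 1/2)
      (fun n => (measurable_const.mul (hNn_m n)).aestronglyMeasurable) hN_as
    refine (h (ENNReal.ofReal (1/16)) (ENNReal.ofReal_pos.2 (by norm_num))).congr fun n => ?_
    congr 1; ext ω
    simp only [Set.mem_setOf_eq, edist_dist]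
    exact ENNReal.ofReal_le_ofReal_iff dist_nonneg
  have hRm : Tendsto (fun n : ℕ => P {ω | δ'/16 ≤ dist ((n : ℝ)⁻¹ * Rn n ω) (δ'/32)})
      atTop (𝓝 0) := by
    have h := tendstoInMeasure_of_tendsto_ae (μ := P)
      (f := fun n ω => (n : ℝ)⁻¹ * Rn n ω) (g := fun _ => δ'/32)
      (fun n => (measurable_const.mul (hRn_m n)).aestronglyMeasurable) hR_as
    refine (h (ENNReal.ofReal (δ'/16)) (ENNReal.ofReal_pos.2 (by positivity))).congr fun n => ?_
    congr 1; ext ω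
    simp only [Set.mem_setOf_eq, edist_dist]
    exact ENNReal.ofReal_le_ofReal_iff dist_nonneg
  -- positivity of Ψ along the process
  have hpos_ae : ∀ᵐ ω ∂P, ∀ i : ℕ, 0 < Ψ (X (i : ℤ) ω) := by
    rw [eventually_countable_forall]
    intro i
    have hs : MeasurableSet {y : ℝ | Ψ y ≤ 0} :=
      measurableSet_le hΨc.measurable measurable_const
    have hμs : μ {y : ℝ | Ψ y ≤ 0} = 0 := by
      have hsub : {y : ℝ | Ψ y ≤ 0} ⊆ {y : ℝ | μ (Set.Iic y) = 0} := by
        intro y hy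
        simp only [Set.mem_setOf_eq] at *
        have h0 : Ψ y = 0 := le_antisymm hy (hΨ0 y)
        rw [hΨ y] at h0
        rcases (ENNReal.toReal_eq_zero_iff _).1 h0 with h | h
        · exact h
        · exact absurd h (measure_ne_top μ _)
      exact le_antisymm (le_trans (measure_mono hsub) (measure_cdfzero_set μ).le) (zero_le)
    have hP : P {ω | Ψ (X (i : ℤ) ω) ≤ 0} = 0 := by
      have h1 : {ω | Ψ (X (i : ℤ) ω) ≤ 0} = X (i : ℤ) ⁻¹' {y | Ψ y ≤ 0} := rfl
      rw [h1, ← Measure.map_apply (hX_meas _) hs, hμ_law, hμs]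
    rw [ae_iff]
    convert hP using 2
    simp [not_lt, Set.ext_iff]
  -- the deterministic implication
  have hdet : ∀ n : ℕ, 1 ≤ n → M / ((δ'/2)^2 * (δ'/32)) < n → ∀ ω : Ω,
      (∀ i : ℕ, 0 < Ψ (X (i : ℤ) ω)) →
      ¬ (δ'/16 * n ≤ |Mn n ω|) →
      ¬ ((1:ℝ)/16 ≤ dist ((n : ℝ)⁻¹ * Nn n ω) (1/2)) →
      ¬ (δ'/16 ≤ dist ((n : ℝ)⁻¹ * Rn n ω) (δ'/32)) →
      M < T n ω := by
    intro n hn hnM ω hpos hM1 hN1 hR1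
    push_neg at hM1 hN1 hR1
    rw [Real.dist_eq] at hN1 hR1
    have hn0 : (0:ℝ) < n := by exact_mod_cast hn
    have hn0' : ((n:ℝ)) ≠ 0 := hn0.ne'
    -- bounds from the good event
    have hNb : (7/16:ℝ)*n ≤ Nn n ω := by
      have h := (abs_lt.1 hN1).1
      have hu : (7/16:ℝ) ≤ (n:ℝ)⁻¹ * Nn n ω := by linarith
      calc (7/16:ℝ)*n ≤ ((n:ℝ)⁻¹ * Nn n ω) * n := mul_le_mul_of_nonneg_right hu hn0.le
      _ = Nn n ω := by
          rw [mul_comm ((n:ℝ)⁻¹) (Nn n ω), mul_assoc, inv_mul_cancel₀ hn0', mul_one]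
    have hRb : Rn n ω ≤ (3*δ'/32)*n := by
      have h := (abs_lt.1 hR1).2
      have hu : (n:ℝ)⁻¹ * Rn n ω ≤ 3*δ'/32 := by linarith
      calc Rn n ω = ((n:ℝ)⁻¹ * Rn n ω) * n := by
            rw [mul_comm ((n:ℝ)⁻¹) (Rn n ω), mul_assoc, inv_mul_cancel₀ hn0', mul_one]
      _ ≤ (3*δ'/32) * n := mul_le_mul_of_nonneg_right hu hn0.le
    -- decomposition of V at x₀
    have hVMN : V n x₀ ω = Mn n ω + 2*δ*Nn n ω := by
      simp only [hVdef, hMdef, hNdef, hDdef, Finset.mul_sum, ← Finset.sum_add_distrib]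
      exact Finset.sum_congr rfl fun i _ => by ring
    have hNnn : 0 ≤ Nn n ω := Finset.sum_nonneg fun i _ => hχ_nonneg i x₀ ω
    have hVx₀ : (13/16)*δ'*n ≤ |V n x₀ ω| := by
      have h1 : |2*δ*Nn n ω| = 2*δ'*Nn n ω := by
        rw [abs_mul, abs_mul, abs_of_nonneg hNnn, hδ'def]
        norm_num
      have h2 : |2*δ*Nn n ω| - |Mn n ω| ≤ |V n x₀ ω| := by
        have h3 : |2*δ*Nn n ω| = |V n x₀ ω - Mn n ω| := by rw [hVMN]; ring_nf
        have h4 := abs_sub (V n x₀ ω) (Mn n ω)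
        linarith [h3 ▸ h4]
      rw [h1] at h2
      have e1 : 2*δ'*((7/16:ℝ)*n) ≤ 2*δ'*Nn n ω :=
        mul_le_mul_of_nonneg_left hNb (by positivity)
      linarith only [h2, e1, hM1]
    -- V is large on all of (x₀, x₁]
    have hVx : ∀ x ∈ Set.Ioc x₀ x₁, δ'/2*n ≤ |V n x ω| := by
      intro x hx
      have hdiff : |V n x ω - V n x₀ ω| ≤ Rn n ω := by
        have heq : V n x ω - V n x₀ ω
            = ∑ i ∈ Finset.range n, W i ω * (χ i x ω - χ i x₀ ω) := by
          simp only [hVdef, ← Finset.sum_sub_distrib]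
          exact Finset.sum_congr rfl fun i _ => by ring
        rw [heq, hRdef]
        calc |∑ i ∈ Finset.range n, W i ω * (χ i x ω - χ i x₀ ω)|
            ≤ ∑ i ∈ Finset.range n, |W i ω * (χ i x ω - χ i x₀ ω)| :=
              Finset.abs_sum_le_sum_abs _ _
        _ ≤ ∑ i ∈ Finset.range n, (χ i x₁ ω - χ i x₀ ω) := by
            refine Finset.sum_le_sum fun i _ => ?_
            have hb : |χ i x ω - χ i x₀ ω| ≤ χ i x₁ ω - χ i x₀ ω := by
              simp only [hχdef]
              rcases le_or_gt (X (i:ℤ) ω) x₀ with h0 | h0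
              · rw [if_pos h0, if_pos (h0.trans hx.1.le), if_pos (h0.trans hx01.le)]
                norm_num
              · rw [if_neg (not_le.2 h0)]
                rcases le_or_gt (X (i:ℤ) ω) x with h2 | h2
                · rw [if_pos h2, if_pos (h2.trans hx.2)]
                  norm_num
                · rw [if_neg (not_le.2 h2)]
                  split_ifs <;> norm_num
            calc |W i ω * (χ i x ω - χ i x₀ ω)|
                = |W i ω| * |χ i x ω - χ i x₀ ω| := abs_mul _ _
            _ ≤ 1 * (χ i x₁ ω - χ i x₀ ω) :=
                mul_le_mul (hW_le i ω) hb (abs_nonneg _) (by norm_num)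
            _ = χ i x₁ ω - χ i x₀ ω := one_mul _
      have h6 := abs_sub_abs_le_abs_sub (V n x₀ ω) (V n x ω)
      have h7 : |V n x₀ ω - V n x ω| = |V n x ω - V n x₀ ω| := abs_sub_comm _ _
      have h8 : |V n x₀ ω| - Rn n ω ≤ |V n x ω| := by
        rw [h7] at h6
        linarith only [h6, hdiff]
      have hprod : 0 ≤ δ'*(n:ℝ) := by positivity
      linarith only [h8, hVx₀, hRb, hprod]
    -- bound on |V|
    have hVle : ∀ x : ℝ, |V n x ω| ≤ n := by
      intro x
      simp only [hVdef]
      calc |∑ i ∈ Finset.range n, W i ω * χ i x ω|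
          ≤ ∑ i ∈ Finset.range n, |W i ω * χ i x ω| := Finset.abs_sum_le_sum_abs _ _
      _ ≤ ∑ _i ∈ Finset.range n, (1:ℝ) := by
          refine Finset.sum_le_sum fun i _ => ?_
          rw [abs_mul]
          calc |W i ω| * |χ i x ω| ≤ 1 * 1 := by
                refine mul_le_mul (hW_le i ω) ?_ (abs_nonneg _) (by norm_num)
                rw [abs_of_nonneg (hχ_nonneg i x ω)]
                exact hχ_le i x ω
          _ = 1 := by norm_num
      _ = n := by simp
    -- the integrand
    have hrange : (Finset.range n).Nonempty := Finset.nonempty_range_iff.2 (by omega)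
    set c : ℝ := (Finset.range n).inf' hrange (fun i => Ψ (X (i:ℤ) ω)) with hcdef
    have hc : 0 < c := by
      rw [hcdef, Finset.lt_inf'_iff]
      exact fun i _ => hpos i
    set f : ℝ → ℝ := fun x => ((n:ℝ) * Ψ x)⁻¹ * (V n x ω)^2 with hfdef
    have hf0 : ∀ x, 0 ≤ f x := fun x =>
      mul_nonneg (inv_nonneg.2 (mul_nonneg (Nat.cast_nonneg n) (hΨ0 x))) (sq_nonneg _)
    have hfm : Measurable f := by
      refine ((measurable_const.mul hΨc.measurable).inv.mul ?_)
      refine Measurable.pow_const ?_ 2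
      refine Finset.measurable_sum _ fun i _ => ?_
      refine measurable_const.mul ?_
      exact Measurable.ite (measurableSet_le measurable_const measurable_id)
        measurable_const measurable_const
    have hfb : ∀ x, f x ≤ (n:ℝ)/c := by
      intro x
      by_cases hex : ∃ i ∈ Finset.range n, X (i:ℤ) ω ≤ x
      · obtain ⟨i, hi, hle⟩ := hex
        have hcx : c ≤ Ψ x := le_trans (Finset.inf'_le _ hi) (hΨmono hle)
        have hΨxpos : 0 < Ψ x := lt_of_lt_of_le hc hcx
        have h5 : (V n x ω)^2 ≤ (n:ℝ)^2 := by
          rw [← sq_abs]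
          exact pow_le_pow_left₀ (abs_nonneg _) (hVle x) 2
        have h6 : ((n:ℝ)*Ψ x)⁻¹ ≤ ((n:ℝ)*c)⁻¹ := by
          refine inv_anti₀ (by positivity) ?_
          exact mul_le_mul_of_nonneg_left hcx (Nat.cast_nonneg n)
        calc f x ≤ ((n:ℝ)*c)⁻¹ * (n:ℝ)^2 :=
              mul_le_mul h6 h5 (sq_nonneg _) (by positivity)
        _ = (n:ℝ)/c := by field_simp
      · push_neg at hex
        have hV0 : V n x ω = 0 := by
          simp only [hVdef]
          refine Finset.sum_eq_zero fun i hi => ?_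
          simp only [hχdef]
          rw [if_neg (not_le.2 (hex i hi))]
          ring
        have : f x = 0 := by rw [hfdef]; simp [hV0]
        rw [this]
        positivity
    have hfint : Integrable f μ := by
      refine Integrable.mono' (integrable_const ((n:ℝ)/c)) hfm.aestronglyMeasurable
        (Eventually.of_forall fun x => ?_)
      rw [Real.norm_eq_abs, abs_of_nonneg (hf0 x)]
      exact hfb x
    have hTn : T n ω = ∫ x, f x ∂μ := hT n ω
    have h1 : ∫ x in Set.Ioc x₀ x₁, f x ∂μ ≤ ∫ x, f x ∂μ :=
      setIntegral_le_integral hfint (Eventually.of_forall hf0)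
    have h2 : ((δ'/2)^2*n) * (μ (Set.Ioc x₀ x₁)).toReal
        ≤ ∫ x in Set.Ioc x₀ x₁, f x ∂μ := by
      refine setIntegral_ge_of_const_le_real measurableSet_Ioc (measure_ne_top μ _)
        (fun x hx => ?_) hfint.integrableOn
      have hΨx1 : Ψ x ≤ 1 := hΨ1 x
      have hΨxpos : 0 < Ψ x := by
        have h9 : (1/2:ℝ) ≤ Ψ x := hx₀ ▸ hΨmono hx.1.le
        linarith
      have hV2 : ((δ'/2)*n)^2 ≤ (V n x ω)^2 := by
        rw [← sq_abs (V n x ω)]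
        exact pow_le_pow_left₀ (by positivity) (hVx x hx) 2
      have hinv : ((n:ℝ))⁻¹ ≤ ((n:ℝ) * Ψ x)⁻¹ := by
        refine inv_anti₀ (by positivity) ?_
        calc (n:ℝ) * Ψ x ≤ (n:ℝ) * 1 := mul_le_mul_of_nonneg_left hΨx1 (Nat.cast_nonneg n)
        _ = n := mul_one _
      calc (δ'/2)^2*(n:ℝ) = (n:ℝ)⁻¹ * ((δ'/2)*n)^2 := by
            have he : ((δ'/2:ℝ)*n)^2 = ((δ'/2)^2*n) * n := by ring
            rw [he, mul_comm ((n:ℝ)⁻¹) (((δ'/2)^2*(n:ℝ)) * n), mul_assoc,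
              mul_inv_cancel₀ hn0', mul_one]
      _ ≤ ((n:ℝ)*Ψ x)⁻¹ * (V n x ω)^2 :=
          mul_le_mul hinv hV2 (by positivity) (by positivity)
    have h3 : M < ((δ'/2)^2*n) * (δ'/32) := by
      have hκ : 0 < (δ'/2)^2 * (δ'/32) := by positivity
      rw [div_lt_iff₀ hκ] at hnM
      calc M < n * ((δ'/2)^2 * (δ'/32)) := hnM
      _ = ((δ'/2)^2*n) * (δ'/32) := by ring
    rw [hTn]
    calc M < ((δ'/2)^2*n) * (δ'/32) := h3
    _ = ((δ'/2)^2*n) * (μ (Set.Ioc x₀ x₁)).toReal := by rw [hIoc]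
    _ ≤ ∫ x in Set.Ioc x₀ x₁, f x ∂μ := h2
    _ ≤ ∫ x, f x ∂μ := h1
  -- assembly
  set κ : ℝ := (δ'/2)^2 * (δ'/32) with hκdef
  have hκ : 0 < κ := by rw [hκdef]; positivity
  obtain ⟨N, hN⟩ := exists_nat_gt (M / κ)
  set Bad : ℕ → Set Ω := fun n =>
    {ω | δ'/16 * n ≤ |Mn n ω|} ∪
      ({ω | (1:ℝ)/16 ≤ dist ((n : ℝ)⁻¹ * Nn n ω) (1/2)} ∪
       {ω | δ'/16 ≤ dist ((n : ℝ)⁻¹ * Rn n ω) (δ'/32)}) with hBaddef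
  have hBadMeas : ∀ n, MeasurableSet (Bad n) := by
    intro n
    simp only [hBaddef]
    refine MeasurableSet.union ?_ (MeasurableSet.union ?_ ?_)
    · exact measurableSet_le measurable_const (hMn_m n).abs
    · exact measurableSet_le measurable_const
        ((measurable_const.mul (hNn_m n)).dist measurable_const)
    · exact measurableSet_le measurable_const
        ((measurable_const.mul (hRn_m n)).dist measurable_const)
  have hBad0 : Tendsto (fun n => P (Bad n)) atTop (𝓝 0) := by
    have hup : ∀ n : ℕ, P (Bad n) ≤ P {ω | δ'/16 * n ≤ |Mn n ω|}
        + (P {ω | (1:ℝ)/16 ≤ dist ((n : ℝ)⁻¹ * Nn n ω) (1/2)}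
          + P {ω | δ'/16 ≤ dist ((n : ℝ)⁻¹ * Rn n ω) (δ'/32)}) := by
      intro n
      simp only [hBaddef]
      exact le_trans (measure_union_le _ _) (add_le_add le_rfl (measure_union_le _ _))
    have hE1tend : Tendsto (fun n : ℕ => P {ω | δ'/16 * n ≤ |Mn n ω|}) atTop (𝓝 0) := by
      have hbound : ∀ᶠ n : ℕ in atTop, P {ω | δ'/16 * n ≤ |Mn n ω|}
          ≤ ENNReal.ofReal ((4 / (δ'/16)^2) * (n:ℝ)⁻¹) := by
        filter_upwards [eventually_ge_atTop 1] with n hn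
        have h := hE1 n hn
        have hn' : (0:ℝ) < n := by exact_mod_cast hn
        have he : (4 * (n:ℝ)) / (δ'/16 * n)^2 = (4 / (δ'/16)^2) * (n:ℝ)⁻¹ := by
          field_simp
        rwa [he] at h
      have hup2 : Tendsto (fun n : ℕ => ENNReal.ofReal ((4 / (δ'/16)^2) * (n:ℝ)⁻¹))
          atTop (𝓝 0) := by
        have h := tendsto_inv_atTop_nhds_zero_nat.const_mul (4 / (δ'/16)^2)
        rw [mul_zero] at h
        have h2 := ENNReal.tendsto_ofReal h
        simpa using h2
      exact tendsto_of_tendsto_of_tendsto_of_le_of_le' tendsto_const_nhds hup2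
        (Eventually.of_forall fun n => zero_le) hbound
    have hsum := hE1tend.add (hNm.add hRm)
    simp only [add_zero] at hsum
    exact tendsto_of_tendsto_of_tendsto_of_le_of_le tendsto_const_nhds hsum
      (fun n => zero_le) hup
  have hGood1 : Tendsto (fun n => P ((Bad n)ᶜ)) atTop (𝓝 1) := by
    have h : ∀ n, P ((Bad n)ᶜ) = 1 - P (Bad n) := fun n => prob_compl_eq_one_sub (hBadMeas n)
    simp only [h]
    have h2 := ENNReal.Tendsto.sub (tendsto_const_nhds (x := (1:ℝ≥0∞))) hBad0
      (Or.inl ENNReal.one_ne_top)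
    simpa using h2
  have hlow : ∀ᶠ n : ℕ in atTop, P ((Bad n)ᶜ) ≤ P {ω | M < T n ω} := by
    filter_upwards [eventually_ge_atTop (max N 1)] with n hn
    refine measure_mono_ae ?_
    filter_upwards [hpos_ae] with ω hω hcomp
    simp only [hBaddef, Set.mem_compl_iff] at hcomp
    have h1 : ¬ (δ'/16 * (n:ℝ) ≤ |Mn n ω|) := fun h => hcomp (Set.mem_union_left _ h)
    have h2 : ¬ ((1:ℝ)/16 ≤ dist ((n:ℝ)⁻¹ * Nn n ω) (1/2)) :=
      fun h => hcomp (Set.mem_union_right _ (Set.mem_union_left _ h))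
    have h3 : ¬ (δ'/16 ≤ dist ((n:ℝ)⁻¹ * Rn n ω) (δ'/32)) :=
      fun h => hcomp (Set.mem_union_right _ (Set.mem_union_right _ h))
    have hn1 : 1 ≤ n := le_trans (le_max_right N 1) hn
    have hnM : M / κ < n := by
      calc M / κ < N := hN
      _ ≤ n := by exact_mod_cast le_trans (le_max_left N 1) hn
    exact hdet n hn1 hnM ω hω h1 h2 h3
  exact tendsto_of_tendsto_of_tendsto_of_le_of_le' hGood1 tendsto_const_nhds hlow
    (Eventually.of_forall fun n => prob_le_one)
end
end

section
/- Let {X_i}_{i≥0} be a strictly stationary ergodic real-valued process with invariant law μ (a Borel probability measure on ℝ) whose cumulative distribution function is Ψ, so that n^{-1} Σ_{i=1}^n g(X_{i-1}) → ∫ g dμ almost surely for every μ-integrable g. Let F̂_n(x) = n^{-1} Σ_{i=1}^n 1_{(-∞,x]}(X_{i-1}) denote the empirical distribution function. Then ∫_ℝ (F̂_n(x))² μ(dx) → ∫_ℝ (Ψ(x))² μ(dx) almost surely as n → ∞. -/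
open MeasureTheory ProbabilityTheory Filter
open scoped ENNReal NNReal Topology

noncomputable section

/-- **Ergodic convergence of the squared empirical distribution functional:**
for a strictly stationary ergodic process with invariant law `μ` and cdf `Ψ`,
`∫ (F̂_n(x))² μ(dx) → ∫ (Ψ(x))² μ(dx)` almost surely, where
`F̂_n(x) = n⁻¹ Σ_{i=1}^n 1_{(-∞,x]}(X_{i-1})`. -/
theorem empirical_df_squared_integral_convergence
    (Ω : Type*) [MeasurableSpace Ω] (P : Measure Ω) [IsProbabilityMeasure P]
    (X : ℕ → Ω → ℝ) (hX_meas : ∀ i, Measurable (X i))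
    -- strict stationarity
    (hstat : ∀ (k nn : ℕ) (idx : Fin nn → ℕ),
      P.map (fun ω => fun j => X (idx j + k) ω) = P.map (fun ω => fun j => X (idx j) ω))
    -- the invariant law μ and ergodicity
    (μ : Measure ℝ) [IsProbabilityMeasure μ]
    (hμ_law : ∀ i, P.map (X i) = μ)
    (herg : ∀ g : ℝ → ℝ, Integrable g μ →
      ∀ᵐ ω ∂P, Tendsto (fun n : ℕ => (n : ℝ)⁻¹ * ∑ i ∈ Finset.range n, g (X i ω))
        atTop (𝓝 (∫ x, g x ∂μ)))
    -- the distribution function Ψ of μ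
    (Ψ : ℝ → ℝ) (hΨ : ∀ x, Ψ x = (μ (Set.Iic x)).toReal) :
    -- conclusion
    ∀ᵐ ω ∂P, Tendsto (fun n : ℕ =>
        ∫ x, ((n : ℝ)⁻¹ * ∑ i ∈ Finset.range n,
            if X i ω ≤ x then (1 : ℝ) else 0) ^ 2 ∂μ)
      atTop (𝓝 (∫ x, Ψ x ^ 2 ∂μ)) := by
  classical
  set Fn : Ω → ℕ → ℝ → ℝ := fun ω n x =>
    (n : ℝ)⁻¹ * ∑ i ∈ Finset.range n, if X i ω ≤ x then (1 : ℝ) else 0 with hFn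
  have hΨmono : Monotone Ψ := by
    intro a b hab
    rw [hΨ, hΨ]
    exact ENNReal.toReal_mono (measure_ne_top μ _)
      (measure_mono (Set.Iic_subset_Iic.2 hab))
  -- the countable set of atoms together with the rationals
  have hA : Set.Countable {x : ℝ | 0 < μ {x}} := by
    apply Measure.countable_meas_pos_of_disjoint_of_meas_iUnion_ne_top
      (As := fun x : ℝ => {x})
    · exact fun x => measurableSet_singleton x
    · intro a b hab
      simpa [Function.onFun] using hab
    · exact measure_ne_top μ _
  set D : Set ℝ := {x : ℝ | 0 < μ {x}} ∪ Set.range ((↑) : ℚ → ℝ) with hD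
  have hDc : D.Countable := hA.union (Set.countable_range _)
  -- pointwise a.s. convergence of the empirical df at a fixed point
  have key : ∀ d : ℝ, ∀ᵐ ω ∂P, Tendsto (fun n => Fn ω n d) atTop (𝓝 (Ψ d)) := by
    intro d
    have hint : Integrable ((Set.Iic d).indicator (fun _ => (1 : ℝ))) μ :=
      (integrable_const 1).indicator measurableSet_Iic
    have h := herg _ hint
    have hval : ∫ x, (Set.Iic d).indicator (fun _ => (1 : ℝ)) x ∂μ = Ψ d := by
      rw [integral_indicator_const (1 : ℝ) measurableSet_Iic, hΨ d, smul_eq_mul, mul_one, measureReal_def]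
    rw [hval] at h
    filter_upwards [h] with ω hω
    have : (fun n : ℕ => (n : ℝ)⁻¹ *
        ∑ i ∈ Finset.range n, (Set.Iic d).indicator (fun _ => (1 : ℝ)) (X i ω))
        = fun n => Fn ω n d := by
      funext n
      simp [hFn, Set.indicator_apply, Set.mem_Iic]
    rwa [this] at hω
  have keyD : ∀ᵐ ω ∂P, ∀ d ∈ D, Tendsto (fun n => Fn ω n d) atTop (𝓝 (Ψ d)) :=
    (ae_ball_iff hDc).2 fun d _ => key d
  filter_upwards [keyD] with ω hω
  -- monotonicity of the empirical distribution function
  have hmono : ∀ n : ℕ, Monotone (Fn ω n) := by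
    intro n a b hab
    apply mul_le_mul_of_nonneg_left _ (by positivity)
    apply Finset.sum_le_sum
    intro i _
    by_cases h : X i ω ≤ a
    · simp [h, h.trans hab]
    · simp only [h, if_false]
      split <;> norm_num
  -- pointwise convergence at every real point
  have hptwise : ∀ x : ℝ, Tendsto (fun n => Fn ω n x) atTop (𝓝 (Ψ x)) := by
    intro x
    rw [tendsto_order]
    constructor
    · -- lower bound
      intro a ha
      by_cases hx : x ∈ D
      · exact ((hω x hx).eventually_const_lt ha)
      · -- x is not an atom: approach from the left
        have hxatom : μ {x} = 0 := by
          by_contra h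
          exact hx (Or.inl (pos_iff_ne_zero.2 h))
        have hIio : μ (Set.Iio x) = μ (Set.Iic x) := by
          refine le_antisymm (measure_mono Set.Iio_subset_Iic_self) ?_
          calc μ (Set.Iic x) = μ (Set.Iio x ∪ {x}) := by rw [Set.Iio_union_right]
            _ ≤ μ (Set.Iio x) + μ {x} := measure_union_le _ _
            _ = μ (Set.Iio x) := by rw [hxatom, add_zero]
        have hunion : (⋃ k : ℕ, Set.Iic (x - 1 / (k + 1))) = Set.Iio x := by
          ext y
          simp only [Set.mem_iUnion, Set.mem_Iic, Set.mem_Iio]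
          constructor
          · rintro ⟨k, hk⟩
            have : (0 : ℝ) < 1 / (k + 1) := by positivity
            linarith
          · intro hy
            obtain ⟨k, hk⟩ := exists_nat_one_div_lt (sub_pos.2 hy)
            exact ⟨k, by linarith⟩
        have hmon : Monotone fun k : ℕ => Set.Iic (x - 1 / (k + 1)) := by
          intro i j hij
          apply Set.Iic_subset_Iic.2
          have : (1 : ℝ) / (j + 1) ≤ 1 / (i + 1) := by
            apply one_div_le_one_div_of_le (by positivity)
            have : (i : ℝ) + 1 ≤ (j : ℝ) + 1 := by exact_mod_cast Nat.succ_le_succ hij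
            linarith
          linarith
        have htend := tendsto_measure_iUnion_atTop (μ := μ) hmon
        rw [hunion, hIio] at htend
        have htendR : Tendsto (fun k : ℕ => (μ (Set.Iic (x - 1 / (k + 1)))).toReal)
            atTop (𝓝 (Ψ x)) := by
          rw [hΨ]
          exact (ENNReal.tendsto_toReal (measure_ne_top μ _)).comp htend
        have : ∀ᶠ k : ℕ in atTop, a < (μ (Set.Iic (x - 1 / (k + 1)))).toReal :=
          htendR.eventually_const_lt ha
        obtain ⟨k, hk⟩ := this.exists
        obtain ⟨q, hq1, hq2⟩ := exists_rat_btwn (show x - 1 / (k + 1) < x by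
          have : (0 : ℝ) < 1 / (k + 1) := by positivity
          linarith)
        have hqD : (q : ℝ) ∈ D := Or.inr ⟨q, rfl⟩
        have haq : a < Ψ q := by
          calc a < (μ (Set.Iic (x - 1 / (k + 1)))).toReal := hk
            _ ≤ Ψ q := by
              rw [hΨ]
              exact ENNReal.toReal_mono (measure_ne_top μ _)
                (measure_mono (Set.Iic_subset_Iic.2 hq1.le))
        filter_upwards [(hω _ hqD).eventually_const_lt haq] with n hn
        exact hn.trans_le (hmono n hq2.le)
    · -- upper bound, using right-continuity (holds at every point)
      intro b hb
      have hinter : (⋂ k : ℕ, Set.Iic (x + 1 / (k + 1))) = Set.Iic x := by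
        ext y
        simp only [Set.mem_iInter, Set.mem_Iic]
        constructor
        · intro h
          by_contra hxy
          push_neg at hxy
          obtain ⟨k, hk⟩ := exists_nat_one_div_lt (sub_pos.2 hxy)
          have := h k
          linarith
        · intro h k
          have : (0 : ℝ) < 1 / (k + 1) := by positivity
          linarith
      have hant : Antitone fun k : ℕ => Set.Iic (x + 1 / (k + 1)) := by
        intro i j hij
        apply Set.Iic_subset_Iic.2
        have : (1 : ℝ) / (j + 1) ≤ 1 / (i + 1) := by
          apply one_div_le_one_div_of_le (by positivity)
          have : (i : ℝ) + 1 ≤ (j : ℝ) + 1 := by exact_mod_cast Nat.succ_le_succ hij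
          linarith
        linarith
      have htend := tendsto_measure_iInter_atTop (μ := μ)
        (fun k => measurableSet_Iic.nullMeasurableSet) hant ⟨0, measure_ne_top μ _⟩
      rw [hinter] at htend
      have htendR : Tendsto (fun k : ℕ => (μ (Set.Iic (x + 1 / (k + 1)))).toReal)
          atTop (𝓝 (Ψ x)) := by
        rw [hΨ]
        exact (ENNReal.tendsto_toReal (measure_ne_top μ _)).comp htend
      have : ∀ᶠ k : ℕ in atTop, (μ (Set.Iic (x + 1 / (k + 1)))).toReal < b :=
        htendR.eventually_lt_const hb
      obtain ⟨k, hk⟩ := this.exists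
      obtain ⟨q, hq1, hq2⟩ := exists_rat_btwn (show x < x + 1 / (k + 1) by
        have : (0 : ℝ) < 1 / (k + 1) := by positivity
        linarith)
      have hqD : (q : ℝ) ∈ D := Or.inr ⟨q, rfl⟩
      have hqb : Ψ q < b := by
        calc Ψ q ≤ (μ (Set.Iic (x + 1 / (k + 1)))).toReal := by
              rw [hΨ]
              exact ENNReal.toReal_mono (measure_ne_top μ _)
                (measure_mono (Set.Iic_subset_Iic.2 hq2.le))
          _ < b := hk
      filter_upwards [(hω _ hqD).eventually_lt_const hqb] with n hn
      exact (hmono n hq1.le).trans_lt hn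
  -- bounds 0 ≤ Fn ≤ 1
  have hFn_nonneg : ∀ n x, 0 ≤ Fn ω n x := by
    intro n x
    apply mul_nonneg (by positivity)
    apply Finset.sum_nonneg
    intro i _
    split <;> norm_num
  have hFn_le_one : ∀ n x, Fn ω n x ≤ 1 := by
    intro n x
    rcases Nat.eq_zero_or_pos n with h | h
    · simp [hFn, h]
    · have hsum : (∑ i ∈ Finset.range n, if X i ω ≤ x then (1 : ℝ) else 0) ≤ n := by
        calc (∑ i ∈ Finset.range n, if X i ω ≤ x then (1 : ℝ) else 0)
            ≤ ∑ i ∈ Finset.range n, (1 : ℝ) := by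
              apply Finset.sum_le_sum
              intro i _
              split <;> norm_num
          _ = n := by simp
      have hn : (0 : ℝ) < (n : ℝ) := by exact_mod_cast h
      rw [hFn]
      calc (n : ℝ)⁻¹ * ∑ i ∈ Finset.range n, (if X i ω ≤ x then (1 : ℝ) else 0)
          ≤ (n : ℝ)⁻¹ * n := mul_le_mul_of_nonneg_left hsum (by positivity)
        _ = 1 := inv_mul_cancel₀ hn.ne'
  -- dominated convergence
  apply tendsto_integral_of_dominated_convergence (fun _ => (1 : ℝ))
  · intro n
    apply AEStronglyMeasurable.pow
    apply Measurable.aestronglyMeasurable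
    apply Measurable.const_mul
    apply Finset.measurable_sum
    intro i _
    have : (fun x : ℝ => if X i ω ≤ x then (1 : ℝ) else 0)
        = (Set.Ici (X i ω)).indicator (fun _ => (1 : ℝ)) := by
      funext x
      simp [Set.indicator_apply, Set.mem_Ici]
    rw [this]
    exact measurable_const.indicator measurableSet_Ici
  · exact integrable_const 1
  · intro n
    filter_upwards with x
    rw [Real.norm_eq_abs, abs_of_nonneg (by positivity)]
    exact pow_le_one₀ (hFn_nonneg n x) (hFn_le_one n x)
  · filter_upwards with x
    exact (hptwise x).pow 2
end
end
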